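/- arXiv:2309.05050 — 6 statements merged into one kernel-verified Lean document; each statement's English description precedes it below -/
import Mathlib

section
/- The equation √(36ξ+3)/4 + sin(2π√(12ξ+1)/3) = 0 has exactly one solution ξ in the open interval (1/4, 2/3). -/
open Real

noncomputable def gfun (u : ℝ) : ℝ := Real.sqrt 3 * u / 4 + Real.sin (2 * π * u / 3)

lemma lin_hasDeriv (u : ℝ) : HasDerivAt (fun u : ℝ => 2 * π * u / 3) (2 * π / 3) u := by
  simpa using ((hasDerivAt_id u).const_mul (2 * π)).div_const 3

lemma gfun_hasDeriv (u : ℝ) :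
    HasDerivAt gfun (Real.sqrt 3 / 4 + Real.cos (2 * π * u / 3) * (2 * π / 3)) u := by
  have h1 : HasDerivAt (fun u : ℝ => Real.sqrt 3 * u / 4) (Real.sqrt 3 / 4) u := by
    simpa using ((hasDerivAt_id u).const_mul (Real.sqrt 3)).div_const 4
  have h3 := (Real.hasDerivAt_sin (2 * π * u / 3)).comp u (lin_hasDeriv u)
  exact h1.add h3

lemma gfun_deriv : deriv gfun = fun u => Real.sqrt 3 / 4 + Real.cos (2 * π * u / 3) * (2 * π / 3) :=
  funext fun u => (gfun_hasDeriv u).deriv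

lemma gfun_hasDeriv2 (u : ℝ) :
    HasDerivAt (deriv gfun) (-Real.sin (2 * π * u / 3) * (2 * π / 3) * (2 * π / 3)) u := by
  rw [gfun_deriv]
  have h3 := ((Real.hasDerivAt_cos (2 * π * u / 3)).comp u (lin_hasDeriv u)).mul_const (2 * π / 3)
  have := (hasDerivAt_const u (Real.sqrt 3 / 4)).add h3
  rw [zero_add] at this
  exact this

lemma gfun_continuous : Continuous gfun := by
  unfold gfun
  exact ((continuous_const.mul continuous_id).div_const 4).add
    (Real.continuous_sin.comp ((continuous_const.mul continuous_id).div_const 3))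

lemma sin_neg_on (θ : ℝ) (h1 : π < θ) (h2 : θ < 2 * π) : Real.sin θ < 0 := by
  have hpos : 0 < Real.sin (θ - π) :=
    Real.sin_pos_of_pos_of_lt_pi (by linarith) (by linarith)
  have : Real.sin (θ - π + π) = -Real.sin (θ - π) := by
    rw [Real.sin_add, Real.sin_pi, Real.cos_pi]; ring
  rw [show θ = θ - π + π by ring, this]
  linarith

lemma gfun_strictConvex : StrictConvexOn ℝ (Set.Icc (2:ℝ) 3) gfun := by
  apply strictConvexOn_of_deriv2_pos (convex_Icc 2 3) gfun_continuous.continuousOn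
  intro x hx
  rw [interior_Icc] at hx
  have h2 : deriv^[2] gfun x = -Real.sin (2 * π * x / 3) * (2 * π / 3) * (2 * π / 3) := by
    rw [show deriv^[2] gfun = deriv (deriv gfun) from rfl]
    exact (gfun_hasDeriv2 x).deriv
  rw [h2]
  have hπ := Real.pi_pos
  have hs : Real.sin (2 * π * x / 3) < 0 := by
    apply sin_neg_on <;> nlinarith [hx.1, hx.2]
  have h3 : (0:ℝ) < 2 * π / 3 := by positivity
  exact mul_pos (mul_pos (neg_pos.mpr hs) h3) h3

lemma gfun_two : gfun 2 = 0 := by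
  unfold gfun
  rw [show 2 * π * 2 / 3 = π / 3 + π by ring, Real.sin_add, Real.sin_pi, Real.cos_pi,
    Real.sin_pi_div_three]
  ring

lemma gfun_94 : gfun (9/4) < 0 := by
  unfold gfun
  rw [show 2 * π * (9/4) / 3 = π / 2 + π by ring, Real.sin_add, Real.sin_pi, Real.cos_pi,
    Real.sin_pi_div_two]
  nlinarith [Real.sq_sqrt (by norm_num : (0:ℝ) ≤ 3), Real.sqrt_nonneg 3]

lemma gfun_52 : 0 < gfun (5/2) := by
  unfold gfun
  rw [show 2 * π * (5/2) / 3 = -(π / 3) + 2 * π by ring, Real.sin_add_two_pi, Real.sin_neg,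
    Real.sin_pi_div_three]
  have : 0 < Real.sqrt 3 := Real.sqrt_pos.mpr (by norm_num)
  nlinarith

lemma gfun_zeros_aux {a b : ℝ} (ha : a ∈ Set.Ioo (2:ℝ) 3) (hb : b ∈ Set.Ioo (2:ℝ) 3)
    (hab : a < b) (hga : gfun a = 0) (hgb : gfun b = 0) : False := by
  obtain ⟨ha1, ha2⟩ := ha
  obtain ⟨hb1, hb2⟩ := hb
  have hd : (0:ℝ) < b - 2 := by linarith
  have hne : (2:ℝ) ≠ b := by intro h; rw [← h] at hb1; linarith
  have key := gfun_strictConvex.2 ⟨le_refl 2, by norm_num⟩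
    ⟨by linarith, le_of_lt hb2⟩ hne
    (show (0:ℝ) < (b - a)/(b - 2) from div_pos (by linarith) hd)
    (show (0:ℝ) < (a - 2)/(b - 2) from div_pos (by linarith) hd)
    (show (b - a)/(b - 2) + (a - 2)/(b - 2) = 1 by field_simp; ring)
  rw [smul_eq_mul, smul_eq_mul, smul_eq_mul] at key
  have harg : (b - a)/(b - 2) * 2 + (a - 2)/(b - 2) * b = a := by field_simp; ring
  rw [harg, hga, gfun_two, hgb] at key
  simp at key

lemma gfun_zeros {a b : ℝ} (ha : a ∈ Set.Ioo (2:ℝ) 3) (hb : b ∈ Set.Ioo (2:ℝ) 3)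
    (hga : gfun a = 0) (hgb : gfun b = 0) : a = b := by
  rcases lt_trichotomy a b with h | h | h
  · exact absurd (gfun_zeros_aux ha hb h hga hgb) (not_false)
  · exact h
  · exact absurd (gfun_zeros_aux hb ha h hgb hga) (not_false)

lemma feq (ξ : ℝ) :
    Real.sqrt (36 * ξ + 3) / 4 + Real.sin (2 * π * Real.sqrt (12 * ξ + 1) / 3)
      = gfun (Real.sqrt (12 * ξ + 1)) := by
  rw [show (36 * ξ + 3 : ℝ) = 3 * (12 * ξ + 1) by ring,
    Real.sqrt_mul (by norm_num : (0:ℝ) ≤ 3)]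
  rfl

/-- The equation `√(36ξ+3)/4 + sin(2π√(12ξ+1)/3) = 0` has exactly one solution
`ξ` in the open interval `(1/4, 2/3)`. -/
theorem backbone_equation_unique_solution :
    ∃! ξ : ℝ, ξ ∈ Set.Ioo (1/4 : ℝ) (2/3 : ℝ) ∧
      Real.sqrt (36 * ξ + 3) / 4 + Real.sin (2 * π * Real.sqrt (12 * ξ + 1) / 3) = 0 := by
  -- Existence via IVT
  have hsub : Set.Ioo (gfun (9/4)) (gfun (5/2)) ⊆ gfun '' Set.Ioo (9/4 : ℝ) (5/2) :=
    intermediate_value_Ioo (by norm_num) gfun_continuous.continuousOn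
  obtain ⟨u₀, hu₀mem, hu₀⟩ := hsub ⟨gfun_94, gfun_52⟩
  obtain ⟨hu₀1, hu₀2⟩ := hu₀mem
  have hu₀pos : (0:ℝ) < u₀ := by linarith
  have hu₀mem' : u₀ ∈ Set.Ioo (2:ℝ) 3 := ⟨by linarith, by linarith⟩
  set ξ₀ : ℝ := (u₀^2 - 1)/12 with hξ₀def
  have h12 : 12 * ξ₀ + 1 = u₀^2 := by rw [hξ₀def]; ring
  have hsqrt₀ : Real.sqrt (12 * ξ₀ + 1) = u₀ := by
    rw [h12, Real.sqrt_sq hu₀pos.le]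
  refine ⟨ξ₀, ⟨⟨by nlinarith, by nlinarith⟩, by rw [feq, hsqrt₀]; exact hu₀⟩, ?_⟩
  rintro ξ ⟨⟨h1, h2⟩, hf⟩
  have hu2 : (Real.sqrt (12 * ξ + 1))^2 = 12 * ξ + 1 := Real.sq_sqrt (by linarith)
  have hun : 0 ≤ Real.sqrt (12 * ξ + 1) := Real.sqrt_nonneg _
  have humem : Real.sqrt (12 * ξ + 1) ∈ Set.Ioo (2:ℝ) 3 := ⟨by nlinarith, by nlinarith⟩
  have hgu : gfun (Real.sqrt (12 * ξ + 1)) = 0 := by rw [← feq]; exact hf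
  have huu : Real.sqrt (12 * ξ + 1) = u₀ := gfun_zeros humem hu₀mem' hgu hu₀
  have : 12 * ξ + 1 = 12 * ξ₀ + 1 := by rw [← hu2, huu, h12]
  linarith
end

section
/- There is no rational number ρ with 2 < ρ < 3 such that (√3/4)ρ + sin(2πρ/3) = 0. -/
open Real

/-- Subtracting an integer does not change the denominator. -/
lemma den_sub_two (q : ℚ) : (q - 2).den = q.den := by
  have hb : (0:ℤ) < (q.den : ℤ) := by exact_mod_cast q.pos
  have hred : IsCoprime q.num (q.den : ℤ) := by
    rw [Int.isCoprime_iff_gcd_eq_one]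
    exact q.reduced
  have hcop : IsCoprime (q.num - 2 * q.den) ((q.den : ℤ)) := by
    have := hred.add_mul_left_left (-2)
    simpa [mul_comm, sub_eq_add_neg, neg_mul, mul_neg] using this
  have hcop' : Nat.Coprime (q.num - 2 * q.den).natAbs ((q.den : ℤ)).natAbs :=
    Int.isCoprime_iff_gcd_eq_one.mp hcop
  have hd : ((q.den : ℚ)) ≠ 0 := by
    exact_mod_cast q.den_nz
  have hnum : (q.num : ℚ) = q * q.den := (div_eq_iff hd).mp (Rat.num_div_den q)
  have h1 : q - 2 = ((q.num - 2 * q.den : ℤ) : ℚ) / ((q.den : ℤ) : ℚ) := by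
    push_cast
    rw [eq_div_iff hd, hnum]
    ring
  have h2 := Rat.den_div_eq_of_coprime hb hcop'
  rw [h1]
  exact_mod_cast h2

/-- Niven core: if `2 cos (2πa/b)` is rational then it is an integer. -/
lemma niven_core (a : ℤ) (b : ℕ) (hb : 0 < b) (q : ℚ)
    (hq : (q : ℝ) = 2 * Real.cos (2 * π * a / b)) : q.den = 1 := by
  set θ : ℝ := 2 * π * a / b with hθ
  set f : ℕ → ℚ := fun n => (fun x : ℚ => x ^ 2 - 2)^[n] q with hf
  have hfs : ∀ n, f (n + 1) = (f n) ^ 2 - 2 := fun n =>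
    Function.iterate_succ_apply' _ _ _
  have hval : ∀ n, ((f n : ℚ) : ℝ) = 2 * Real.cos (2 ^ n * θ) := by
    intro n
    induction n with
    | zero => simpa [hf] using hq
    | succ n ih =>
      rw [hfs n]
      push_cast
      rw [ih]
      have h2 : (2:ℝ) ^ (n + 1) * θ = 2 * (2 ^ n * θ) := by ring
      rw [h2, Real.cos_two_mul]
      ring
  have hden : ∀ n, (f n).den = q.den ^ 2 ^ n := by
    intro n
    induction n with
    | zero => simp [hf]
    | succ n ih =>
      rw [hfs n, den_sub_two, Rat.den_pow, ih, ← pow_mul, pow_succ]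
  -- pigeonhole on `2 ^ n % b`
  have hpigeon : ∃ m n : ℕ, m < n ∧ 2 ^ m % b = 2 ^ n % b := by
    obtain ⟨i, j, hne, hij⟩ := Fintype.exists_ne_map_eq_of_card_lt
      (fun i : Fin (b + 1) => (⟨2 ^ (i : ℕ) % b, Nat.mod_lt _ hb⟩ : Fin b)) (by simp)
    have hij' : 2 ^ (i : ℕ) % b = 2 ^ (j : ℕ) % b := by
      simpa using congrArg Fin.val hij
    rcases lt_or_gt_of_ne (fun h : (i : ℕ) = (j : ℕ) => hne (Fin.ext h)) with h | h
    · exact ⟨i, j, h, hij'⟩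
    · exact ⟨j, i, h, hij'.symm⟩
  obtain ⟨m, n, hmn, hmod⟩ := hpigeon
  -- from equal residues, the cosines agree
  have hle : 2 ^ m ≤ 2 ^ n := Nat.pow_le_pow_right (by norm_num) hmn.le
  have hdvd : b ∣ 2 ^ n - 2 ^ m := (Nat.modEq_iff_dvd' hle).mp hmod
  obtain ⟨k, hk⟩ := hdvd
  have hbR : ((b : ℝ)) ≠ 0 := by positivity
  have hangle : (2:ℝ) ^ n * θ = 2 ^ m * θ + (↑(k * a) : ℤ) * (2 * π) := by
    have hpow : ((2:ℝ) ^ n) = 2 ^ m + (b * k : ℕ) := by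
      push_cast
      have : (2:ℝ) ^ n - 2 ^ m = ((2 ^ n - 2 ^ m : ℕ) : ℝ) := by
        push_cast [Nat.cast_sub hle]; ring
      rw [hk] at this
      push_cast at this
      linarith
    rw [hpow, hθ]
    push_cast
    field_simp
  have hcoseq : Real.cos ((2:ℝ) ^ n * θ) = Real.cos ((2:ℝ) ^ m * θ) := by
    rw [hangle, Real.cos_add_int_mul_two_pi]
  have hfeq : f n = f m := by
    have : ((f n : ℚ) : ℝ) = ((f m : ℚ) : ℝ) := by
      rw [hval, hval, hcoseq]
    exact_mod_cast this
  have hdeneq : q.den ^ 2 ^ n = q.den ^ 2 ^ m := by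
    rw [← hden, ← hden, hfeq]
  by_contra hne
  have h2le : 2 ≤ q.den := by
    have := q.pos
    omega
  have : q.den ^ 2 ^ m < q.den ^ 2 ^ n :=
    Nat.pow_lt_pow_right h2le (Nat.pow_lt_pow_right (by norm_num) hmn)
  omega

/-- There is no rational `ρ` with `2 < ρ < 3` such that `(√3/4)ρ + sin(2πρ/3) = 0`. -/
theorem no_rational_zero :
    ¬ ∃ ρ : ℚ, 2 < ρ ∧ ρ < 3 ∧
      Real.sqrt 3 / 4 * (ρ : ℝ) + Real.sin (2 * π * (ρ : ℝ) / 3) = 0 := by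
  rintro ⟨ρ, h2, h3, heq⟩
  have hsqrt3 : Real.sqrt 3 ^ 2 = 3 := Real.sq_sqrt (by norm_num)
  have hs : Real.sin (2 * π * (ρ:ℝ) / 3) = -(Real.sqrt 3 / 4 * ρ) := by linarith
  have hsq : Real.sin (2 * π * (ρ:ℝ) / 3) ^ 2 = 3 / 16 * (ρ:ℝ) ^ 2 := by
    rw [hs]
    nlinarith [hsqrt3]
  have hpyth := Real.sin_sq_add_cos_sq (2 * π * (ρ:ℝ) / 3)
  have hcos2 : Real.cos (2 * (2 * π * (ρ:ℝ) / 3)) = 1 - 3 / 8 * (ρ:ℝ) ^ 2 := by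
    rw [Real.cos_two_mul]
    nlinarith [hsq, hpyth]
  -- apply the Niven core lemma
  set q : ℚ := 2 - 3 / 4 * ρ ^ 2 with hqdef
  have hdenpos : (0:ℝ) < (ρ.den : ℝ) := by exact_mod_cast ρ.pos
  have hcast : (ρ : ℝ) = (ρ.num : ℝ) / (ρ.den : ℝ) := by rw [Rat.cast_def]
  have hangle : 2 * π * ((2 * ρ.num : ℤ) : ℝ) / ((3 * ρ.den : ℕ) : ℝ) =
      2 * (2 * π * (ρ:ℝ) / 3) := by
    rw [hcast]
    push_cast
    field_simp
  have hq : (q : ℝ) = 2 * Real.cos (2 * π * ((2 * ρ.num : ℤ)) / ((3 * ρ.den : ℕ))) := by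
    rw [hangle, hcos2, hqdef]
    push_cast
    ring
  have hden1 : q.den = 1 := niven_core (2 * ρ.num) (3 * ρ.den) (by positivity) q hq
  -- q is an integer, and -2 ≤ q < -1, so q = -2
  have hqlt : q < -1 := by
    have : (4:ℚ) < ρ ^ 2 := by nlinarith
    rw [hqdef]; linarith
  have hqge : (-2 : ℚ) ≤ q := by
    have hcge : (-1:ℝ) ≤ Real.cos (2 * π * ((2 * ρ.num : ℤ)) / ((3 * ρ.den : ℕ))) :=
      Real.neg_one_le_cos _
    have : (-2:ℝ) ≤ (q:ℝ) := by rw [hq]; linarith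
    exact_mod_cast this
  have hz : (q.num : ℚ) = q := by
    rw [← Rat.den_eq_one_iff]
    exact hden1
  have hq2 : q = -2 := by
    have h1 : (q.num : ℚ) < -1 := by rw [hz]; exact hqlt
    have h2 : (-2:ℚ) ≤ (q.num : ℚ) := by rw [hz]; exact hqge
    have h1' : q.num < -1 := by exact_mod_cast h1
    have h2' : (-2:ℤ) ≤ q.num := by exact_mod_cast h2
    have : q.num = -2 := by omega
    rw [← hz, this]; norm_num
  -- then ρ² = 16/3, so 3 = (3ρ/4)², contradicting irrationality of √3
  have hρsq : ρ ^ 2 = 16 / 3 := by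
    rw [hqdef] at hq2; linarith
  have ht : (3 * ρ / 4) ^ 2 = 3 := by rw [div_pow, mul_pow, hρsq]; norm_num
  have htpos : (0:ℚ) < 3 * ρ / 4 := by linarith
  have hirr : Irrational (Real.sqrt 3) := by
    have := (Nat.prime_three).irrational_sqrt
    simpa using this
  apply hirr
  refine ⟨3 * ρ / 4, ?_⟩
  have htR : ((3 * ρ / 4 : ℚ) : ℝ) ^ 2 = 3 := by exact_mod_cast ht
  have htRpos : (0:ℝ) ≤ ((3 * ρ / 4 : ℚ) : ℝ) := by exact_mod_cast htpos.le
  rw [← htR, Real.sqrt_sq htRpos]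
end

section
/- For all rational numbers q₁, q₂, q: if cos(π q₁) = q · cos(π q₂), then either both 2cos(π q₁) and 2cos(π q₂) are integers, or q ∈ {0, 1, −1}. -/
set_option maxHeartbeats 1000000

open Real

lemma aux_isIntegral_of_pow_eq_one {R A : Type*} [CommRing R] [CommRing A] [Algebra R A]
    {u : A} {m : ℕ} (hu : u ^ m = 1) (hm : m ≠ 0) : IsIntegral R u := by
  refine ⟨Polynomial.X ^ m - Polynomial.C 1, Polynomial.monic_X_pow_sub_C 1 hm, ?_⟩
  simp [Polynomial.eval₂, hu]

lemma aux_core (K : IntermediateField ℚ ℂ) [FiniteDimensional ℚ K]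
    (x y : K) (a b : ℤ)
    (hcop : IsCoprime a b) (ha : 2 ≤ a.natAbs) (hb : b ≠ 0)
    (hx : IsIntegral ℤ x) (hy : IsIntegral ℤ y)
    (hbx : ∀ φ : K →ₐ[ℚ] ℂ, ‖φ x‖ ≤ 2)
    (heq : (b : K) * x = (a : K) * y)
    (hreal : ∃ r : ℝ, (x : ℂ) = (r : ℂ)) :
    ∃ m n : ℤ, (x : ℂ) = (m : ℂ) ∧ (y : ℂ) = (n : ℂ) := by
  have ha0 : a ≠ 0 := by
    rintro rfl; simp at ha
  set d := Module.finrank ℚ K with hd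
  have hd0 : d ≠ 0 := Module.finrank_pos.ne'
  obtain ⟨X, hX⟩ := IsIntegrallyClosed.isIntegral_iff.mp (Algebra.isIntegral_norm ℚ hx)
  obtain ⟨Y, hY⟩ := IsIntegrallyClosed.isIntegral_iff.mp (Algebra.isIntegral_norm ℚ hy)
  -- norm of the relation
  have hNrel : b ^ d * X = a ^ d * Y := by
    have h1 : Algebra.norm ℚ ((b : K) * x) = Algebra.norm ℚ ((a : K) * y) := by rw [heq]
    rw [map_mul, map_mul] at h1
    have hbn : Algebra.norm ℚ ((b : K) : K) = ((b : ℚ)) ^ d := by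
      have : ((b : ℤ) : K) = algebraMap ℚ K ((b : ℤ) : ℚ) := by push_cast; simp
      rw [this, Algebra.norm_algebraMap]
    have han : Algebra.norm ℚ ((a : K) : K) = ((a : ℚ)) ^ d := by
      have : ((a : ℤ) : K) = algebraMap ℚ K ((a : ℤ) : ℚ) := by push_cast; simp
      rw [this, Algebra.norm_algebraMap]
    rw [hbn, han, ← hX, ← hY] at h1
    have : ((b ^ d * X : ℤ) : ℚ) = ((a ^ d * Y : ℤ) : ℚ) := by
      push_cast
      simpa [eq_intCast] using h1
    exact_mod_cast this
  have hdvd : a ^ d ∣ X := (hcop.pow).dvd_of_dvd_mul_left ⟨Y, hNrel⟩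
  by_cases hX0 : X = 0
  · -- then x = 0 and y = 0
    have hx0 : x = 0 := by
      have : Algebra.norm ℚ x = 0 := by rw [← hX, hX0]; simp
      exact Algebra.norm_eq_zero_iff.mp this
    have hy0 : y = 0 := by
      have : (a : K) * y = 0 := by rw [← heq, hx0, mul_zero]
      have ha' : (a : K) ≠ 0 := Int.cast_ne_zero.mpr ha0
      exact (mul_eq_zero.mp this).resolve_left ha'
    exact ⟨0, 0, by simp [hx0], by simp [hy0]⟩
  · -- |X| ≥ |a|^d ≥ 2^d
    have habsdvd : |a| ^ d ∣ |X| := by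
      rw [← abs_pow]
      exact (abs_dvd _ _).mpr ((dvd_abs _ _).mpr hdvd)
    have hXlb : (2 : ℤ) ^ d ≤ |X| := by
      calc (2:ℤ) ^ d ≤ |a| ^ d := by
            refine pow_le_pow_left₀ (by norm_num) ?_ d
            rw [Int.abs_eq_natAbs]; exact_mod_cast ha
        _ ≤ |X| := Int.le_of_dvd (abs_pos.mpr hX0) habsdvd
    -- product formula
    have hprod : ((X : ℂ)) = ∏ φ : K →ₐ[ℚ] ℂ, φ x := by
      have := Algebra.norm_eq_prod_embeddings ℚ ℂ x
      rw [← hX] at this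
      simpa [eq_intCast] using this
    have habs : (|X| : ℝ) = ∏ φ : K →ₐ[ℚ] ℂ, ‖φ x‖ := by
      have := congrArg (‖·‖) hprod
      rwa [Complex.norm_intCast, norm_prod] at this
    have hcard : Fintype.card (K →ₐ[ℚ] ℂ) = d := AlgHom.card ℚ K ℂ
    -- product upper bound gives |X| ≤ 2^d
    have hXub : (|X| : ℝ) ≤ 2 ^ d := by
      rw [habs]
      calc ∏ φ : K →ₐ[ℚ] ℂ, ‖φ x‖
          ≤ ∏ _φ : K →ₐ[ℚ] ℂ, (2:ℝ) := by
            exact Finset.prod_le_prod (fun φ _ => (norm_nonneg _)) (fun φ _ => hbx φ)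
        _ = 2 ^ d := by rw [Finset.prod_const, Finset.card_univ, hcard]
    -- |a| = 2
    have haabs : |a| = 2 := by
      have h1 : (2:ℤ) ≤ |a| := by rw [Int.abs_eq_natAbs]; exact_mod_cast ha
      have h2 : |a| ^ d ≤ 2 ^ d := by
        have : (|a| ^ d : ℝ) ≤ 2 ^ d := by
          calc (|a| ^ d : ℝ) ≤ (|X| : ℝ) := by
                exact_mod_cast Int.le_of_dvd (abs_pos.mpr hX0) habsdvd
            _ ≤ 2 ^ d := hXub
        exact_mod_cast this
      have := (pow_le_pow_iff_left₀ (abs_nonneg a) (by norm_num) hd0).mp h2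
      omega
    -- the inclusion embedding
    let φ₀ : K →ₐ[ℚ] ℂ := K.val
    have hφ₀ : φ₀ x = (x : ℂ) := rfl
    -- |x| = 2
    have hxabs : ‖(x : ℂ)‖ = 2 := by
      refine le_antisymm (by simpa [hφ₀] using hbx φ₀) ?_
      by_contra hlt
      push_neg at hlt
      have hpos : ∀ φ : K →ₐ[ℚ] ℂ, φ ∈ Finset.univ → 0 < ‖φ x‖ := by
        intro φ _
        rcases (norm_nonneg (φ x)).lt_or_eq with h | h
        · exact h
        · exfalso
          have : (|X| : ℝ) = 0 := by
            rw [habs]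
            exact Finset.prod_eq_zero (Finset.mem_univ φ) h.symm
          have : |X| = 0 := by exact_mod_cast this
          exact hX0 (abs_eq_zero.mp this)
      have hstrict : (|X| : ℝ) < 2 ^ d := by
        rw [habs]
        calc ∏ φ : K →ₐ[ℚ] ℂ, ‖φ x‖
            < ∏ _φ : K →ₐ[ℚ] ℂ, (2:ℝ) :=
              Finset.prod_lt_prod hpos (fun φ _ => hbx φ)
                ⟨φ₀, Finset.mem_univ _, by simpa [hφ₀] using hlt⟩
          _ = 2 ^ d := by rw [Finset.prod_const, Finset.card_univ, hcard]
      have : ((2:ℝ) ^ d) < 2 ^ d := lt_of_le_of_lt (by exact_mod_cast hXlb) hstrict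
      exact lt_irrefl _ this
    -- x = ±2 as a complex number
    obtain ⟨r, hr⟩ := hreal
    have hrabs : |r| = 2 := by
      rw [hr, Complex.norm_real, Real.norm_eq_abs] at hxabs
      exact hxabs
    have hx2 : (x : ℂ) = 2 ∨ (x : ℂ) = -2 := by
      rcases abs_eq (by norm_num : (0:ℝ) ≤ 2) |>.mp hrabs with h | h
      · left; rw [hr, h]; norm_num
      · right; rw [hr, h]; norm_num
    -- compute y
    have heqC : (b : ℂ) * (x : ℂ) = (a : ℂ) * (y : ℂ) := by
      have := congrArg (fun z : K => (z : ℂ)) heq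
      push_cast at this
      exact this
    have ha2 : a = 2 ∨ a = -2 := by
      rcases abs_eq (by norm_num : (0:ℤ) ≤ 2) |>.mp haabs with h | h
      · left; exact h
      · right; exact h
    have hyval : ∀ (ε₁ ε₂ : ℤ), (x : ℂ) = ε₁ * 2 → a = ε₂ * 2 →
        (y : ℂ) = ((ε₁ * ε₂ * b : ℤ) : ℂ) := by
      intro ε₁ ε₂ hx' ha'
      have hane : (a : ℂ) ≠ 0 := Int.cast_ne_zero.mpr ha0
      have hε₂ : (ε₂ : ℂ) * (ε₂ : ℂ) = 1 := by
        have : ε₂ = 1 ∨ ε₂ = -1 := by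
          rcases ha2 with h | h <;> rw [h] at ha' <;> omega
        rcases this with h | h <;> simp [h]
      have key : (a : ℂ) * (y : ℂ) = (a : ℂ) * ((ε₁ * ε₂ * b : ℤ) : ℂ) := by
        rw [← heqC, hx', ha']
        push_cast
        linear_combination (-2 * (ε₁:ℂ) * (b:ℂ)) * hε₂
      exact mul_left_cancel₀ hane key
    rcases hx2 with hx' | hx' <;> rcases ha2 with ha' | ha'
    · exact ⟨2, b, hx', by simpa using hyval 1 1 (by rw [hx']; norm_num) (by omega)⟩
    · exact ⟨2, -b, hx', by simpa using hyval 1 (-1) (by rw [hx']; norm_num) (by omega)⟩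
    · exact ⟨-2, -b, by rw [hx']; norm_num, by simpa using hyval (-1) 1 (by rw [hx']; norm_num) (by omega)⟩
    · exact ⟨-2, b, by rw [hx']; norm_num, by simpa using hyval (-1) (-1) (by rw [hx']; norm_num) (by omega)⟩


open IntermediateField

/-- For rationals `q₁, q₂, q`: if `cos(π q₁) = q · cos(π q₂)` then either both
`2cos(π q₁)` and `2cos(π q₂)` are integers, or `q ∈ {0, 1, −1}`. -/
theorem rational_cosine_relation (q₁ q₂ q : ℚ)
    (h : Real.cos (π * (q₁ : ℝ)) = (q : ℝ) * Real.cos (π * (q₂ : ℝ))) :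
    ((∃ m : ℤ, 2 * Real.cos (π * (q₁ : ℝ)) = (m : ℝ)) ∧
      (∃ n : ℤ, 2 * Real.cos (π * (q₂ : ℝ)) = (n : ℝ))) ∨
    q = 0 ∨ q = 1 ∨ q = -1 := by
  by_cases hq0 : q = 0; · exact Or.inr (Or.inl hq0)
  by_cases hq1 : q = 1; · exact Or.inr (Or.inr (Or.inl hq1))
  by_cases hqm1 : q = -1; · exact Or.inr (Or.inr (Or.inr hqm1))
  left
  -- the setting
  set N : ℕ := q₁.den * q₂.den with hNdef
  have hN0 : N ≠ 0 := Nat.mul_ne_zero q₁.den_pos.ne' q₂.den_pos.ne'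
  have hNR : (N : ℝ) ≠ 0 := Nat.cast_ne_zero.mpr hN0
  have h2N0 : 2 * N ≠ 0 := by omega
  set ζ : ℂ := Complex.exp ((π / N : ℝ) * Complex.I) with hζdef
  have hζpow : ζ ^ (2 * N) = 1 := by
    rw [hζdef, ← Complex.exp_nat_mul]
    have hNC : ((q₁.den * q₂.den : ℕ) : ℂ) ≠ 0 :=
      Nat.cast_ne_zero.mpr (Nat.mul_ne_zero q₁.den_pos.ne' q₂.den_pos.ne')
    rw [show ((2 * N : ℕ) : ℂ) * (((π / N : ℝ) : ℂ) * Complex.I)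
        = 2 * (π : ℂ) * Complex.I by push_cast; field_simp]
    exact Complex.exp_two_pi_mul_I
  have hzpow : ∀ j : ℤ, ζ ^ (j : ℤ) = Complex.exp (((j * π / N : ℝ) : ℂ) * Complex.I) := by
    intro j
    rw [hζdef, ← Complex.exp_int_mul]
    congr 1
    push_cast
    ring
  set j₁ : ℤ := q₁.num * q₂.den with hj₁def
  set j₂ : ℤ := q₂.num * q₁.den with hj₂def
  have hang₁ : ((j₁ : ℝ) * π / N) = π * q₁ := by
    rw [hj₁def, hNdef, Rat.cast_def]
    have h1 : (q₁.den : ℝ) ≠ 0 := Nat.cast_ne_zero.mpr q₁.den_pos.ne'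
    have h2 : (q₂.den : ℝ) ≠ 0 := Nat.cast_ne_zero.mpr q₂.den_pos.ne'
    push_cast
    field_simp
  have hang₂ : ((j₂ : ℝ) * π / N) = π * q₂ := by
    rw [hj₂def, hNdef, Rat.cast_def]
    have h1 : (q₁.den : ℝ) ≠ 0 := Nat.cast_ne_zero.mpr q₁.den_pos.ne'
    have h2 : (q₂.den : ℝ) ≠ 0 := Nat.cast_ne_zero.mpr q₂.den_pos.ne'
    push_cast
    field_simp
  -- the sums of roots of unity are the cosines
  have hsum : ∀ j : ℤ, ((j : ℝ) * π / N = π * ((j:ℝ) * π / N / π)) → True := fun _ _ => trivial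
  have hcos : ∀ (j : ℤ) (t : ℝ), ((j : ℝ) * π / N) = t →
      ζ ^ (j : ℤ) + ζ ^ (-j : ℤ) = ((2 * Real.cos t : ℝ) : ℂ) := by
    intro j t ht
    rw [hzpow j, hzpow (-j)]
    have h1 : ((((-j : ℤ) : ℝ) * π / N : ℝ) : ℂ) = -(((t : ℝ)) : ℂ) := by
      rw [← ht]; push_cast; ring
    have h2 : (((j : ℝ) * π / N : ℝ) : ℂ) = ((t : ℝ) : ℂ) := by rw [← ht]
    rw [h1, h2]
    have := Complex.two_cos (x := ((t : ℝ) : ℂ))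
    rw [neg_mul] at this ⊢
    rw [← this, ← Complex.ofReal_cos]
    push_cast
    ring
  have hx1 : ζ ^ (j₁ : ℤ) + ζ ^ (-j₁ : ℤ) = ((2 * Real.cos (π * q₁) : ℝ) : ℂ) :=
    hcos j₁ _ hang₁
  have hy1 : ζ ^ (j₂ : ℤ) + ζ ^ (-j₂ : ℤ) = ((2 * Real.cos (π * q₂) : ℝ) : ℂ) :=
    hcos j₂ _ hang₂
  -- the field
  have hζint : IsIntegral ℚ ζ := aux_isIntegral_of_pow_eq_one hζpow h2N0
  set K : IntermediateField ℚ ℂ := ℚ⟮ζ⟯ with hKdef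
  haveI : FiniteDimensional ℚ K := adjoin.finiteDimensional hζint
  set ζK : K := AdjoinSimple.gen ℚ ζ with hζKdef
  have hζKcoe : (ζK : ℂ) = ζ := rfl
  have hcoe : ∀ j : ℤ, ((ζK ^ (j : ℤ) : K) : ℂ) = ζ ^ (j : ℤ) := by
    intro j
    exact map_zpow₀ (K.val) ζK j
  have hζKpow : ζK ^ (2 * N) = 1 := by
    apply Subtype.coe_injective
    push_cast
    exact hζpow
  set xK : K := ζK ^ (j₁ : ℤ) + ζK ^ (-j₁ : ℤ) with hxKdef
  set yK : K := ζK ^ (j₂ : ℤ) + ζK ^ (-j₂ : ℤ) with hyKdef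
  have hxKcoe : (xK : ℂ) = ((2 * Real.cos (π * q₁) : ℝ) : ℂ) := by
    have h' : (xK : ℂ) = ζ ^ (j₁ : ℤ) + ζ ^ (-j₁ : ℤ) := by
      rw [hxKdef]; push_cast [hcoe]; ring
    rw [h', hx1]
  have hyKcoe : (yK : ℂ) = ((2 * Real.cos (π * q₂) : ℝ) : ℂ) := by
    have h' : (yK : ℂ) = ζ ^ (j₂ : ℤ) + ζ ^ (-j₂ : ℤ) := by
      rw [hyKdef]; push_cast [hcoe]; ring
    rw [h', hy1]
  -- integrality
  have hint : ∀ j : ℤ, IsIntegral ℤ (ζK ^ (j : ℤ) + ζK ^ (-j : ℤ)) := by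
    intro j
    have hz : ∀ i : ℤ, IsIntegral ℤ (ζK ^ (i : ℤ)) := by
      intro i
      refine aux_isIntegral_of_pow_eq_one (m := 2 * N) ?_ h2N0
      rw [← zpow_natCast (ζK ^ (i : ℤ)), ← zpow_mul, mul_comm i, zpow_mul, zpow_natCast,
        hζKpow, one_zpow]
    exact (hz j).add (hz (-j))
  -- bounds on embeddings
  have hbound : ∀ (j : ℤ) (φ : K →ₐ[ℚ] ℂ),
      ‖φ (ζK ^ (j : ℤ) + ζK ^ (-j : ℤ))‖ ≤ 2 := by
    intro j φ
    have hw : (φ ζK) ^ (2 * N) = 1 := by rw [← map_pow, hζKpow, map_one]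
    have hw1 : ‖φ ζK‖ = 1 := Complex.norm_eq_one_of_pow_eq_one hw h2N0
    rw [map_add, map_zpow₀, map_zpow₀]
    calc ‖(φ ζK) ^ (j : ℤ) + (φ ζK) ^ (-j : ℤ)‖
        ≤ ‖(φ ζK) ^ (j : ℤ)‖ + ‖(φ ζK) ^ (-j : ℤ)‖ :=
          norm_add_le _ _
      _ = 2 := by rw [norm_zpow, norm_zpow, hw1, one_zpow, one_zpow]; norm_num
  -- the linear relation over K
  have hre : (q.den : ℝ) * (2 * Real.cos (π * q₁)) = (q.num : ℝ) * (2 * Real.cos (π * q₂)) := by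
    rw [h, Rat.cast_def]
    have hd : (q.den : ℝ) ≠ 0 := Nat.cast_ne_zero.mpr q.den_pos.ne'
    field_simp
  have heqK : ((q.den : ℤ) : K) * xK = ((q.num : ℤ) : K) * yK := by
    apply Subtype.coe_injective
    push_cast [hxKcoe, hyKcoe]
    have h' := congrArg (Complex.ofReal) hre
    push_cast at h'
    exact h'
  -- coprimality
  have hcop : IsCoprime q.num ((q.den : ℤ)) := by
    rw [Int.isCoprime_iff_gcd_eq_one]
    simpa [Int.gcd] using q.reduced
  have hden0 : ((q.den : ℤ)) ≠ 0 := Int.natCast_ne_zero.mpr q.den_pos.ne'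
  have hnum0 : q.num ≠ 0 := Rat.num_ne_zero.mpr hq0
  -- case split on the size of num/den
  have hcase : 2 ≤ q.num.natAbs ∨ 2 ≤ q.den := by
    by_cases hden : q.den = 1
    · left
      have hqint : (q : ℚ) = (q.num : ℚ) := by
        conv_lhs => rw [← Rat.num_div_den q]
        rw [hden]; simp
      have h1 : q.num ≠ 1 := by rintro h1; exact hq1 (by rw [hqint, h1]; norm_num)
      have h2 : q.num ≠ -1 := by rintro h2; exact hqm1 (by rw [hqint, h2]; norm_num)
      omega
    · right
      have := q.den_pos
      omega
  rcases hcase with hcase | hcase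
  · obtain ⟨m, n, hm, hn⟩ := aux_core K xK yK q.num (q.den : ℤ) hcop hcase hden0
      (hint j₁) (hint j₂) (fun φ => hbound j₁ φ) heqK ⟨_, hxKcoe⟩
    constructor
    · exact ⟨m, by exact_mod_cast hxKcoe ▸ hm⟩
    · exact ⟨n, by exact_mod_cast hyKcoe ▸ hn⟩
  · obtain ⟨m, n, hm, hn⟩ := aux_core K yK xK ((q.den : ℤ)) q.num hcop.symm
      (by simpa using hcase) hnum0 (hint j₂) (hint j₁) (fun φ => hbound j₂ φ) heqK.symm
      ⟨_, hyKcoe⟩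
    constructor
    · exact ⟨n, by exact_mod_cast hxKcoe ▸ hn⟩
    · exact ⟨m, by exact_mod_cast hyKcoe ▸ hm⟩
end

section
/- For every ε ∈ (0,1) and all real a, b > 0, the integral ∫₀^∞ ((1+t)^(−a) − (1+t)^(−b)) · t^(−1−ε) dt converges absolutely and equals Γ(−ε)·Γ(ε+a)/Γ(a) − Γ(−ε)·Γ(ε+b)/Γ(b). -/
open Real MeasureTheory

open Set Filter Topology

section GammaDiffAux

lemma realBeta_Ioo {u v : ℝ} (hu : 0 < u) (hv : 0 < v) :
    IntegrableOn (fun x : ℝ => x ^ (u - 1) * (1 - x) ^ (v - 1)) (Ioo 0 1) ∧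
    ∫ x in Ioo (0:ℝ) 1, x ^ (u - 1) * (1 - x) ^ (v - 1)
      = Gamma u * Gamma v / Gamma (u + v) := by
  have hre : ∀ x ∈ Ioo (0:ℝ) 1,
      ((x ^ (u-1) * (1-x) ^ (v-1) : ℝ) : ℂ)
        = (x:ℂ) ^ ((u:ℂ) - 1) * (1 - (x:ℂ)) ^ ((v:ℂ) - 1) := by
    intro x hx
    rw [show ((u:ℂ) - 1) = ((u - 1 : ℝ) : ℂ) by push_cast; ring,
        show ((v:ℂ) - 1) = ((v - 1 : ℝ) : ℂ) by push_cast; ring,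
        show (1 - (x:ℂ)) = ((1 - x : ℝ) : ℂ) by push_cast; ring,
        ← Complex.ofReal_cpow hx.1.le, ← Complex.ofReal_cpow (by linarith [hx.2]),
        ← Complex.ofReal_mul]
  have hC : IntegrableOn (fun x : ℝ => (x:ℂ) ^ ((u:ℂ) - 1) * (1 - (x:ℂ)) ^ ((v:ℂ) - 1))
      (Ioo 0 1) :=
    (((Complex.betaIntegral_convergent (by simpa) (by simpa)).1).mono_set Ioo_subset_Ioc_self)
  have hint : IntegrableOn (fun x : ℝ => x ^ (u - 1) * (1 - x) ^ (v - 1)) (Ioo 0 1) := by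
    refine IntegrableOn.congr_fun hC.re ?_ measurableSet_Ioo
    intro x hx
    simp [← hre x hx]
  refine ⟨hint, ?_⟩
  have h1 : ((∫ x in Ioo (0:ℝ) 1, x ^ (u-1) * (1-x) ^ (v-1) : ℝ) : ℂ)
      = ∫ x in Ioo (0:ℝ) 1, (x:ℂ) ^ ((u:ℂ) - 1) * (1 - (x:ℂ)) ^ ((v:ℂ) - 1) := by
    exact (integral_ofReal).symm.trans (setIntegral_congr_fun measurableSet_Ioo hre)
  have h2 : ∫ x in Ioo (0:ℝ) 1, (x:ℂ) ^ ((u:ℂ) - 1) * (1 - (x:ℂ)) ^ ((v:ℂ) - 1)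
      = Complex.betaIntegral u v := by
    rw [Complex.betaIntegral, intervalIntegral.integral_of_le zero_le_one,
      integral_Ioc_eq_integral_Ioo]
  have h3 : Complex.betaIntegral u v
      = Complex.Gamma u * Complex.Gamma v / Complex.Gamma (u + v) := by
    have := Complex.Gamma_mul_Gamma_eq_betaIntegral
      (s := (u:ℂ)) (t := (v:ℂ)) (by simpa) (by simpa)
    have hne : Complex.Gamma ((u:ℂ) + v) ≠ 0 :=
      Complex.Gamma_ne_zero_of_re_pos (by simp; positivity)
    field_simp [this]
    rw [this]; ring
  rw [← Complex.ofReal_inj, h1, h2, h3]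
  norm_cast
  simp only [Complex.Gamma_ofReal]
  push_cast
  ring

lemma betaIoi {u v : ℝ} (hu : 0 < u) (hv : 0 < v) :
    IntegrableOn (fun t : ℝ => t ^ (u - 1) * (1 + t) ^ (-u - v)) (Ioi 0) ∧
    ∫ t in Ioi (0:ℝ), t ^ (u - 1) * (1 + t) ^ (-u - v)
      = Gamma u * Gamma v / Gamma (u + v) := by
  set f : ℝ → ℝ := fun t => 1 - (1 + t)⁻¹ with hf
  set f' : ℝ → ℝ := fun t => ((1 + t) ^ 2)⁻¹ with hf'
  set g : ℝ → ℝ := fun x => x ^ (u - 1) * (1 - x) ^ (v - 1) with hg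
  have hderiv : ∀ t ∈ Ioi (0:ℝ), HasDerivWithinAt f (f' t) (Ioi 0) t := by
    intro t ht
    have h1t : (0:ℝ) < 1 + t := by simp at ht; linarith
    have : HasDerivAt (fun t : ℝ => 1 + t) 1 t := by
      simpa using (hasDerivAt_id t).const_add 1
    have h2 := (this.inv h1t.ne').const_sub 1
    refine h2.hasDerivWithinAt.congr_deriv ?_
    simp only [hf']
    field_simp
  have hinj : InjOn f (Ioi 0) := by
    intro s hs t ht hst
    simp only [hf, sub_right_inj, inv_inj, add_right_inj] at hst
    exact hst
  have himg : f '' Ioi 0 = Ioo 0 1 := by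
    ext x
    constructor
    · rintro ⟨t, ht, rfl⟩
      simp only [mem_Ioi] at ht
      have h1t : (0:ℝ) < 1 + t := by linarith
      constructor
      · simp only [hf, sub_pos]
        rw [inv_lt_one_iff₀]; right; linarith
      · simp only [hf]
        have : 0 < (1 + t)⁻¹ := by positivity
        linarith
    · rintro ⟨hx0, hx1⟩
      refine ⟨x / (1 - x), ?_, ?_⟩
      · exact mem_Ioi.mpr (div_pos hx0 (by linarith))
      · have h1x : (0:ℝ) < 1 - x := by linarith
        simp only [hf]
        field_simp
        ring
  have key : ∀ t ∈ Ioi (0:ℝ),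
      |f' t| • g (f t) = t ^ (u - 1) * (1 + t) ^ (-u - v) := by
    intro t ht
    simp only [mem_Ioi] at ht
    have h1t : (0:ℝ) < 1 + t := by linarith
    have hft : f t = t / (1 + t) := by simp only [hf]; field_simp; ring
    have h1ft : 1 - f t = (1 + t)⁻¹ := by simp only [hf]; ring
    have habs : |f' t| = (1 + t) ^ (-2 : ℝ) := by
      simp only [hf']
      rw [abs_of_pos (by positivity), ← Real.rpow_natCast (1 + t) 2,
        ← Real.rpow_neg h1t.le]
      norm_num
    calc |f' t| • g (f t)
        = ((t ^ (u-1) * (1+t) ^ (-(u-1))) * (1+t) ^ (-(v-1))) * (1+t) ^ (-2:ℝ) := by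
          rw [smul_eq_mul, habs]
          simp only [hg]
          rw [h1ft, hft, Real.div_rpow ht.le h1t.le, Real.inv_rpow h1t.le,
            ← Real.rpow_neg h1t.le, div_eq_mul_inv, ← Real.rpow_neg h1t.le]
          ring
      _ = t ^ (u-1) * (1+t) ^ (-u-v) := by
          rw [mul_assoc, mul_assoc, ← Real.rpow_add h1t, ← Real.rpow_add h1t]
          ring_nf
  have hI : IntegrableOn (fun t => |f' t| • g (f t)) (Ioi 0) := by
    have := (realBeta_Ioo hu hv).1
    rw [← himg] at this
    exact (integrableOn_image_iff_integrableOn_abs_deriv_smul measurableSet_Ioi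
      hderiv hinj g).mp this
  constructor
  · exact hI.congr_fun key measurableSet_Ioi
  · have h1 : ∫ x in Ioo (0:ℝ) 1, g x = ∫ t in Ioi (0:ℝ), |f' t| • g (f t) := by
      rw [← himg]
      exact integral_image_eq_integral_abs_deriv_smul measurableSet_Ioi hderiv hinj g
    rw [← setIntegral_congr_fun measurableSet_Ioi key, ← h1]
    exact (realBeta_Ioo hu hv).2

end GammaDiffAux

/-- For `ε ∈ (0,1)` and `a, b > 0`, the integral
`∫₀^∞ ((1+t)^(−a) − (1+t)^(−b))·t^(−1−ε) dt` converges absolutely and equals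
`Γ(−ε)Γ(ε+a)/Γ(a) − Γ(−ε)Γ(ε+b)/Γ(b)`. -/
theorem gamma_difference_integral (ε a b : ℝ) (hε : ε ∈ Set.Ioo (0 : ℝ) 1)
    (ha : 0 < a) (hb : 0 < b) :
    IntegrableOn (fun t : ℝ => ((1 + t) ^ (-a) - (1 + t) ^ (-b)) * t ^ (-1 - ε))
      (Set.Ioi 0) ∧
    ∫ t in Set.Ioi (0 : ℝ), ((1 + t) ^ (-a) - (1 + t) ^ (-b)) * t ^ (-1 - ε) =
      Real.Gamma (-ε) * Real.Gamma (ε + a) / Real.Gamma a -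
        Real.Gamma (-ε) * Real.Gamma (ε + b) / Real.Gamma b := by
  obtain ⟨hε0, hε1⟩ := hε
  set F : ℝ → ℝ := fun t => (1 + t) ^ (-a) - (1 + t) ^ (-b) with hFdef
  set F' : ℝ → ℝ := fun t => -a * (1 + t) ^ (-a - 1) + b * (1 + t) ^ (-b - 1) with hF'def
  -- derivative of F
  have hFderiv : ∀ t : ℝ, 0 ≤ t → HasDerivAt F (F' t) t := by
    intro t ht
    have h1t : (0:ℝ) < 1 + t := by linarith
    have h1 : HasDerivAt (fun t : ℝ => 1 + t) 1 t := by
      simpa using (hasDerivAt_id t).const_add 1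
    have ha' := h1.rpow_const (p := -a) (Or.inl h1t.ne')
    have hb' := h1.rpow_const (p := -b) (Or.inl h1t.ne')
    refine (ha'.sub hb').congr_deriv ?_
    simp only [hF'def]
    ring
  have hF0 : F 0 = 0 := by norm_num [hFdef]
  -- linear bound near 0
  have hFlin : ∀ t : ℝ, 0 ≤ t → |F t| ≤ (a + b) * t := by
    intro t ht
    have := Convex.norm_image_sub_le_of_norm_hasDerivWithin_le (f := F) (f' := F')
      (s := Ici (0:ℝ)) (C := a + b)
      (fun x hx => (hFderiv x hx).hasDerivWithinAt)
      (fun x hx => by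
        have hx0 : (0:ℝ) ≤ x := hx
        have h1x : (0:ℝ) < 1 + x := by linarith
        have e1 : (1 + x) ^ (-a - 1) ≤ 1 :=
          Real.rpow_le_one_of_one_le_of_nonpos (by linarith) (by linarith)
        have e2 : (1 + x) ^ (-b - 1) ≤ 1 :=
          Real.rpow_le_one_of_one_le_of_nonpos (by linarith) (by linarith)
        have p1 : (0:ℝ) ≤ (1 + x) ^ (-a - 1) := Real.rpow_nonneg h1x.le _
        have p2 : (0:ℝ) ≤ (1 + x) ^ (-b - 1) := Real.rpow_nonneg h1x.le _
        simp only [hF'def, Real.norm_eq_abs]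
        calc |(-a) * (1 + x) ^ (-a - 1) + b * (1 + x) ^ (-b - 1)|
            ≤ |(-a) * (1 + x) ^ (-a - 1)| + |b * (1 + x) ^ (-b - 1)| := abs_add_le _ _
          _ ≤ a * 1 + b * 1 := by
              rw [abs_mul, abs_mul, abs_neg, abs_of_pos ha, abs_of_pos hb,
                abs_of_nonneg p1, abs_of_nonneg p2]
              gcongr
          _ = a + b := by ring)
      (convex_Ici 0) (self_mem_Ici) (mem_Ici.mpr ht)
    simpa [hF0, Real.norm_eq_abs, abs_of_nonneg ht] using this
  -- global bound
  have hFbnd : ∀ t : ℝ, 0 ≤ t → |F t| ≤ 2 := by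
    intro t ht
    have h1t : (0:ℝ) < 1 + t := by linarith
    have e1 : (1 + t) ^ (-a) ≤ 1 :=
      Real.rpow_le_one_of_one_le_of_nonpos (by linarith) (by linarith)
    have e2 : (1 + t) ^ (-b) ≤ 1 :=
      Real.rpow_le_one_of_one_le_of_nonpos (by linarith) (by linarith)
    have p1 : (0:ℝ) ≤ (1 + t) ^ (-a) := Real.rpow_nonneg h1t.le _
    have p2 : (0:ℝ) ≤ (1 + t) ^ (-b) := Real.rpow_nonneg h1t.le _
    rw [abs_sub_le_iff]
    constructor <;> linarith
  -- continuity of the integrand on Ioi 0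
  have hcontF : ContinuousOn F (Ioi 0) := by
    intro t ht
    exact ((hFderiv t (le_of_lt ht)).continuousAt).continuousWithinAt
  have hcontg : ContinuousOn (fun t : ℝ => F t * t ^ (-1 - ε)) (Ioi 0) := by
    refine hcontF.mul ?_
    intro t ht
    exact (Real.continuousAt_rpow_const t _ (Or.inl (ne_of_gt ht))).continuousWithinAt
  -- integrability of the main integrand
  have hIg : IntegrableOn (fun t : ℝ => F t * t ^ (-1 - ε)) (Ioi 0) := by
    have h01 : IntegrableOn (fun t : ℝ => F t * t ^ (-1 - ε)) (Ioc 0 1) := by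
      rw [integrableOn_Ioc_iff_integrableOn_Ioo]
      have hbound : IntegrableOn (fun t : ℝ => (a + b) * t ^ (-ε)) (Ioo 0 1) :=
        ((intervalIntegral.integrableOn_Ioo_rpow_iff zero_lt_one).mpr (by linarith)).const_mul _
      refine Integrable.mono' hbound ?_ ?_
      · exact (hcontg.mono (Ioo_subset_Ioi_self.trans (by simp [Ioi_subset_Ioi]))).aestronglyMeasurable
          measurableSet_Ioo
      · rw [ae_restrict_iff' measurableSet_Ioo]
        refine ae_of_all _ fun t ht => ?_
        obtain ⟨ht0, ht1⟩ := ht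
        have hp : (0:ℝ) ≤ t ^ (-1 - ε) := Real.rpow_nonneg ht0.le _
        have key : t * t ^ (-1 - ε) = t ^ (-ε) := by
          rw [← Real.rpow_one_add' ht0.le
            (show 1 + (-1 - ε) ≠ 0 by intro h; exact hε0.ne' (by linarith))]
          congr 1; ring
        calc ‖F t * t ^ (-1 - ε)‖ = |F t| * t ^ (-1 - ε) := by
              rw [norm_mul, Real.norm_eq_abs, Real.norm_eq_abs, abs_of_nonneg hp]
          _ ≤ ((a + b) * t) * t ^ (-1 - ε) := by gcongr; exact hFlin t ht0.le
          _ = (a + b) * t ^ (-ε) := by rw [mul_assoc, key]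
    have h1i : IntegrableOn (fun t : ℝ => F t * t ^ (-1 - ε)) (Ioi 1) := by
      have hbound : IntegrableOn (fun t : ℝ => 2 * t ^ (-1 - ε)) (Ioi 1) :=
        (integrableOn_Ioi_rpow_of_lt (by linarith) zero_lt_one).const_mul 2
      refine Integrable.mono' hbound ?_ ?_
      · exact (hcontg.mono (Ioi_subset_Ioi zero_le_one)).aestronglyMeasurable measurableSet_Ioi
      · rw [ae_restrict_iff' measurableSet_Ioi]
        refine ae_of_all _ fun t ht => ?_
        have ht0 : (0:ℝ) < t := lt_trans zero_lt_one ht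
        have hp : (0:ℝ) ≤ t ^ (-1 - ε) := Real.rpow_nonneg ht0.le _
        calc ‖F t * t ^ (-1 - ε)‖ = |F t| * t ^ (-1 - ε) := by
              rw [norm_mul, Real.norm_eq_abs, Real.norm_eq_abs, abs_of_nonneg hp]
          _ ≤ 2 * t ^ (-1 - ε) := by gcongr; exact hFbnd t ht0.le
    have : Ioc (0:ℝ) 1 ∪ Ioi 1 = Ioi 0 := Ioc_union_Ioi_eq_Ioi zero_le_one
    rw [← this]
    exact h01.union h1i
  refine ⟨hIg, ?_⟩
  -- the J integrals via the Beta function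
  have hJ : ∀ c : ℝ, 0 < c →
      IntegrableOn (fun t : ℝ => t ^ (-ε) * (1 + t) ^ (-c - 1)) (Ioi 0) ∧
      ∫ t in Ioi (0:ℝ), t ^ (-ε) * (1 + t) ^ (-c - 1)
        = Gamma (1 - ε) * Gamma (c + ε) / Gamma (c + 1) := by
    intro c hc
    have h1 := betaIoi (u := 1 - ε) (v := c + ε) (by linarith) (by linarith)
    have e1 : (1 - ε) - 1 = -ε := by ring
    have e2 : -(1 - ε) - (c + ε) = -c - 1 := by ring
    have e3 : (1 - ε) + (c + ε) = c + 1 := by ring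
    rw [e1, e2, e3] at h1
    exact h1
  have hIh : IntegrableOn (fun t : ℝ => F' t * t ^ (-ε)) (Ioi 0) := by
    have h2 := ((hJ a ha).1.const_mul (-a)).add ((hJ b hb).1.const_mul b)
    refine IntegrableOn.congr_fun h2 ?_ measurableSet_Ioi
    intro t ht
    simp only [Pi.add_apply, hF'def]
    ring
  have hIntH : ∫ t in Ioi (0:ℝ), F' t * t ^ (-ε)
      = -a * (Gamma (1 - ε) * Gamma (a + ε) / Gamma (a + 1))
        + b * (Gamma (1 - ε) * Gamma (b + ε) / Gamma (b + 1)) := by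
    have e : ∀ t ∈ Ioi (0:ℝ), F' t * t ^ (-ε)
        = -a * (t ^ (-ε) * (1 + t) ^ (-a - 1)) + b * (t ^ (-ε) * (1 + t) ^ (-b - 1)) := by
      intro t ht; simp only [hF'def]; ring
    rw [setIntegral_congr_fun measurableSet_Ioi e,
      integral_add ((hJ a ha).1.const_mul _) ((hJ b hb).1.const_mul _),
      integral_const_mul, integral_const_mul, (hJ a ha).2, (hJ b hb).2]
  -- the antiderivative G
  set G : ℝ → ℝ := fun t => -(ε⁻¹) * (F t * t ^ (-ε)) with hGdef
  have hG0 : G 0 = 0 := by simp [hGdef, hF0]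
  have hGderiv : ∀ t ∈ Ioi (0:ℝ),
      HasDerivAt G (F t * t ^ (-1 - ε) - ε⁻¹ * (F' t * t ^ (-ε))) t := by
    intro t ht
    have ht0 : (0:ℝ) < t := ht
    have hp : HasDerivAt (fun t : ℝ => t ^ (-ε)) (-ε * t ^ (-ε - 1)) t :=
      Real.hasDerivAt_rpow_const (Or.inl ht0.ne')
    have h2 := ((hFderiv t ht0.le).mul hp).const_mul (-(ε⁻¹))
    refine h2.congr_deriv ?_
    rw [show t ^ (-1 - ε) = t ^ (-ε - 1) by congr 1; ring]
    field_simp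
    ring
  have hGcont : ContinuousWithinAt G (Ici 0) 0 := by
    unfold ContinuousWithinAt
    rw [hG0]
    refine squeeze_zero_norm' (a := fun t : ℝ => ε⁻¹ * (a + b) * t ^ (1 - ε)) ?_ ?_
    · filter_upwards [self_mem_nhdsWithin] with t (ht : t ∈ Ici 0)
      have ht0 : (0:ℝ) ≤ t := ht
      have hq : (0:ℝ) ≤ t ^ (-ε) := Real.rpow_nonneg ht0 _
      have hkey : t * t ^ (-ε) = t ^ (1 - ε) := by
        rw [← Real.rpow_one_add' ht0 (show 1 + -ε ≠ 0 by intro h; exact hε0.ne' (by linarith))]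
        ring_nf
      calc ‖G t‖ = |(-ε⁻¹) * (F t * t ^ (-ε))| := rfl
        _ = ε⁻¹ * (|F t| * t ^ (-ε)) := by
            rw [abs_mul, abs_mul, abs_neg, abs_inv, abs_of_pos hε0, abs_of_nonneg hq]
        _ ≤ ε⁻¹ * (((a + b) * t) * t ^ (-ε)) := by
            have := mul_le_mul_of_nonneg_right (hFlin t ht0) hq
            have hinv : (0:ℝ) ≤ ε⁻¹ := by positivity
            exact mul_le_mul_of_nonneg_left this hinv
        _ = ε⁻¹ * (a + b) * t ^ (1 - ε) := by rw [mul_assoc (a + b), hkey]; ring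
    · have h3 : Tendsto (fun t : ℝ => t ^ (1 - ε)) (𝓝[Ici 0] 0) (𝓝 (0 : ℝ)) := by
        have h4 := (Real.continuousAt_rpow_const 0 (1 - ε)
          (Or.inr (by linarith))).continuousWithinAt (s := Ici 0)
        unfold ContinuousWithinAt at h4
        simpa [Real.zero_rpow (show (1:ℝ) - ε ≠ 0 by intro h; exact hε0.ne' (by linarith))]
          using h4
      simpa using h3.const_mul (ε⁻¹ * (a + b))
  have hGtop : Tendsto G atTop (𝓝 0) := by
    have h1 : Tendsto (fun t : ℝ => F t * t ^ (-ε)) atTop (𝓝 0) := by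
      refine squeeze_zero_norm' (a := fun t : ℝ => 2 * t ^ (-ε)) ?_ ?_
      · filter_upwards [eventually_ge_atTop (0:ℝ)] with t ht
        have hq : (0:ℝ) ≤ t ^ (-ε) := Real.rpow_nonneg ht _
        rw [norm_mul, Real.norm_eq_abs, Real.norm_eq_abs, abs_of_nonneg hq]
        exact mul_le_mul_of_nonneg_right (hFbnd t ht) hq
      · simpa using (tendsto_rpow_neg_atTop hε0).const_mul 2
    have h2 := h1.const_mul (-(ε⁻¹))
    rw [mul_zero] at h2
    exact h2
  have hIG' : IntegrableOn
      (fun t : ℝ => F t * t ^ (-1 - ε) - ε⁻¹ * (F' t * t ^ (-ε))) (Ioi 0) :=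
    hIg.sub (hIh.const_mul _)
  have hmain := integral_Ioi_of_hasDerivAt_of_tendsto hGcont hGderiv hIG' hGtop
  rw [hG0, zero_sub, neg_zero] at hmain
  rw [integral_sub hIg (hIh.const_mul _), integral_const_mul, hIntH] at hmain
  have hfin : ∫ t in Ioi (0:ℝ), F t * t ^ (-1 - ε)
      = ε⁻¹ * (-a * (Gamma (1 - ε) * Gamma (a + ε) / Gamma (a + 1))
        + b * (Gamma (1 - ε) * Gamma (b + ε) / Gamma (b + 1))) := by linarith
  show (∫ t in Ioi (0:ℝ), F t * t ^ (-1 - ε)) = _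
  rw [hfin]
  have hGa : Gamma (a + 1) = a * Gamma a := Real.Gamma_add_one ha.ne'
  have hGb : Gamma (b + 1) = b * Gamma b := Real.Gamma_add_one hb.ne'
  have hG1ε : Gamma (1 - ε) = -ε * Gamma (-ε) := by
    rw [show (1:ℝ) - ε = -ε + 1 by ring]
    exact Real.Gamma_add_one (by simpa using hε0.ne')
  have hGapos := Real.Gamma_pos_of_pos ha
  have hGbpos := Real.Gamma_pos_of_pos hb
  rw [hGa, hGb, hG1ε, show ε + a = a + ε by ring, show ε + b = b + ε by ring]
  field_simp
  ring
end

section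
/- For all real a, b with −1 < a < 0 and −1 < b < 0, the integral ∫₀^∞ (t^a − t^b)/(t − 1) dt converges and equals π·(cot(πb) − cot(πa)). -/
open Real MeasureTheory

section AuxiliaryLemmas
open Set Filter Topology

noncomputable def psi : ℝ → ℝ := deriv (Real.log ∘ Real.Gamma)

lemma Gamma_ne_zero_pos {x : ℝ} (hx : 0 < x) : Real.Gamma x ≠ 0 :=
  (Real.Gamma_pos_of_pos hx).ne'

lemma diffG {x : ℝ} (hx : 0 < x) : DifferentiableAt ℝ Real.Gamma x :=
  Real.differentiableAt_Gamma (fun m => ne_of_gt (lt_of_le_of_lt (neg_nonpos.2 m.cast_nonneg) hx))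

lemma psi_eq {x : ℝ} (hx : 0 < x) : psi x = deriv Real.Gamma x / Real.Gamma x := by
  unfold psi
  rw [Function.comp_def, deriv.log (diffG hx) (Gamma_ne_zero_pos hx)]

lemma psi_reflect {s : ℝ} (h0 : 0 < s) (h1 : s < 1) :
    psi (1 - s) - psi s = π * Real.cot (π * s) := by
  have h1s : 0 < 1 - s := by linarith
  have hsin : Real.sin (π * s) ≠ 0 := by
    refine ne_of_gt (Real.sin_pos_of_pos_of_lt_pi (by positivity) ?_)
    nlinarith [Real.pi_pos]
  -- derivative of LHS of reflection formula
  have hL : HasDerivAt (fun x : ℝ => Real.Gamma x * Real.Gamma (1 - x))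
      (deriv Real.Gamma s * Real.Gamma (1 - s)
        + Real.Gamma s * (deriv Real.Gamma (1 - s) * (-1))) s := by
    have hc : HasDerivAt (fun x : ℝ => Real.Gamma (1 - x)) (deriv Real.Gamma (1 - s) * (-1)) s :=
      (diffG h1s).hasDerivAt.comp s (((hasDerivAt_id s).const_sub 1))
    exact ((diffG h0).hasDerivAt.mul hc)
  have hR : HasDerivAt (fun x : ℝ => π / Real.sin (π * x))
      ((0 * Real.sin (π * s) - π * (Real.cos (π * s) * π)) / (Real.sin (π * s)) ^ 2) s := by
    have hs' : HasDerivAt (fun x : ℝ => Real.sin (π * x)) (Real.cos (π * s) * π) s := by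
      have h := (Real.hasDerivAt_sin (π * s)).comp s ((hasDerivAt_id' s).const_mul π)
      rw [mul_one] at h; exact h
    exact (hasDerivAt_const s π).div hs' hsin
  have hfun : (fun x : ℝ => Real.Gamma x * Real.Gamma (1 - x))
      = fun x : ℝ => π / Real.sin (π * x) := funext fun x => Real.Gamma_mul_Gamma_one_sub x
  rw [hfun] at hL
  have hD := hL.unique hR
  have hrefl := Real.Gamma_mul_Gamma_one_sub s
  rw [psi_eq h1s, psi_eq h0, Real.cot_eq_cos_div_sin]
  have hGs := Gamma_ne_zero_pos h0
  have hG1s := Gamma_ne_zero_pos h1s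
  have hD' : (deriv Real.Gamma s * Real.Gamma (1 - s) - Real.Gamma s * deriv Real.Gamma (1 - s))
      * Real.sin (π * s) ^ 2 = -(π ^ 2 * Real.cos (π * s)) := by
    rw [eq_div_iff (pow_ne_zero 2 hsin)] at hD
    linear_combination hD
  have hrefl' : Real.Gamma s * Real.Gamma (1 - s) * Real.sin (π * s) = π := by
    rw [hrefl, div_mul_cancel₀ _ hsin]
  have e1 : deriv Real.Gamma (1 - s) * Real.Gamma s - Real.Gamma (1 - s) * deriv Real.Gamma s
      = π ^ 2 * Real.cos (π * s) / Real.sin (π * s) ^ 2 := by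
    rw [eq_div_iff (pow_ne_zero 2 hsin)]; linear_combination -hD'
  have e2 : Real.Gamma (1 - s) * Real.Gamma s = π / Real.sin (π * s) := by
    rw [eq_div_iff hsin]; linear_combination hrefl'
  rw [div_sub_div _ _ hG1s hGs, e1, e2, ← mul_div_assoc, div_div_div_eq,
    div_eq_div_iff (mul_ne_zero (pow_ne_zero 2 hsin) Real.pi_ne_zero) hsin]
  ring

lemma diff_logGamma {x : ℝ} (hx : 0 < x) : DifferentiableAt ℝ (Real.log ∘ Real.Gamma) x := by
  refine (Real.differentiableAt_Gamma ?_).log (Real.Gamma_ne_zero ?_) <;>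
    exact fun m => ne_of_gt (lt_of_le_of_lt (neg_nonpos.2 m.cast_nonneg) hx)

lemma psi_rec {x : ℝ} (hx : 0 < x) : psi (x + 1) = psi x + 1 / x := by
  unfold psi
  rw [← deriv_comp_add_const, one_div, ← Real.deriv_log x,
    ← deriv_add (diff_logGamma hx) (Real.differentiableAt_log hx.ne')]
  apply Filter.EventuallyEq.deriv_eq
  filter_upwards [eventually_gt_nhds hx] with t ht
  simp only [Function.comp_apply, Real.Gamma_add_one ht.ne',
    Real.log_mul ht.ne' (Real.Gamma_pos_of_pos ht).ne', add_comm]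
  rfl

lemma psi_mono : MonotoneOn psi (Set.Ioi 0) :=
  Real.convexOn_log_Gamma.monotoneOn_deriv (fun _ hx => diff_logGamma hx)

lemma summable_aux {p q : ℝ} (hp : 0 < p) (hq : 0 < q) :
    Summable (fun n : ℕ => 1 / ((n + p) * (n + q))) := by
  have hb : Summable (fun n : ℕ => (1 / (min p 1 * min q 1)) * (1 / ((n : ℝ) + 1) ^ 2)) := by
    apply Summable.mul_left
    have := (summable_nat_add_iff (f := fun n : ℕ => 1 / (n : ℝ) ^ 2) 1).2 ?_
    · simpa using this
    · simpa using Real.summable_one_div_nat_pow.2 one_lt_two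
  refine hb.of_nonneg_of_le (fun n => by positivity) fun n => ?_
  have h1 : min p 1 * ((n : ℝ) + 1) ≤ n + p := by
    rcases le_total p 1 with h | h
    · rw [min_eq_left h]; nlinarith [Nat.cast_nonneg (α := ℝ) n]
    · rw [min_eq_right h]; nlinarith [Nat.cast_nonneg (α := ℝ) n]
  have h2 : min q 1 * ((n : ℝ) + 1) ≤ n + q := by
    rcases le_total q 1 with h | h
    · rw [min_eq_left h]; nlinarith [Nat.cast_nonneg (α := ℝ) n]
    · rw [min_eq_right h]; nlinarith [Nat.cast_nonneg (α := ℝ) n]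
  have hp1 : (0:ℝ) < min p 1 := lt_min hp one_pos
  have hq1 : (0:ℝ) < min q 1 := lt_min hq one_pos
  have hn1 : (0:ℝ) < (n:ℝ) + 1 := by positivity
  have key : (p ⊓ 1) * (q ⊓ 1) * ((n:ℝ)+1)^2 ≤ ((n:ℝ) + p) * (n + q) := by
    calc (p ⊓ 1) * (q ⊓ 1) * ((n:ℝ)+1)^2 = ((p ⊓ 1) * ((n:ℝ)+1)) * ((q ⊓ 1) * ((n:ℝ)+1)) := by ring
      _ ≤ ((n:ℝ) + p) * (n + q) := mul_le_mul h1 h2 (by positivity) (by positivity)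
  calc 1 / (((n:ℝ) + p) * (n + q)) ≤ 1 / ((p ⊓ 1) * (q ⊓ 1) * ((n:ℝ)+1)^2) :=
        one_div_le_one_div_of_le (by positivity) key
    _ = 1 / ((p ⊓ 1) * (q ⊓ 1)) * (1 / ((n:ℝ)+1)^2) := by
        rw [one_div, one_div, one_div, mul_inv]

lemma summable_diff {p q : ℝ} (hp : 0 < p) (hq : 0 < q) :
    Summable (fun n : ℕ => 1 / ((n : ℝ) + p) - 1 / (n + q)) := by
  have := (summable_aux hp hq).mul_left (q - p)
  refine this.congr fun n => ?_
  have h1 : (n : ℝ) + p ≠ 0 := by positivity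
  have h2 : (n : ℝ) + q ≠ 0 := by positivity
  field_simp
  ring

lemma psi_sum {y : ℝ} (hy : 0 < y) (N : ℕ) :
    psi (y + N) = psi y + ∑ n ∈ Finset.range N, 1 / (y + n) := by
  induction N with
  | zero => simp
  | succ N ih =>
      have : y + (N + 1 : ℕ) = (y + N) + 1 := by push_cast; ring
      rw [this, psi_rec (by positivity), ih, Finset.sum_range_succ]
      ring

lemma hasSum_cot {y : ℝ} (h0 : 0 < y) (h1 : y < 1) :
    HasSum (fun n : ℕ => 1 / ((n : ℝ) + y) - 1 / (n + (1 - y))) (π * Real.cot (π * y)) := by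
  have hsum : Summable (fun n : ℕ => 1 / ((n : ℝ) + y) - 1 / (n + (1 - y))) :=
    summable_diff h0 (by linarith)
  rw [hsum.hasSum_iff_tendsto_nat]
  have e1 : ∀ z : ℝ, 0 < z → ∀ N : ℕ,
      ∑ n ∈ Finset.range N, 1 / ((n : ℝ) + z) = psi (z + N) - psi z := by
    intro z hz N
    rw [psi_sum hz N]
    have h : ∀ n : ℕ, 1 / ((n : ℝ) + z) = 1 / (z + n) := fun n => by rw [add_comm]
    simp_rw [h]
    ring
  have hps : ∀ N : ℕ, ∑ n ∈ Finset.range N, (1 / ((n : ℝ) + y) - 1 / (n + (1 - y)))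
      = (psi (1 - y) - psi y) + (psi (y + N) - psi ((1 - y) + N)) := by
    intro N
    rw [Finset.sum_sub_distrib, e1 y h0 N, e1 (1 - y) (by linarith) N]
    ring
  have hrefl := psi_reflect h0 h1
  have hlim : Tendsto (fun N : ℕ => psi (y + N) - psi ((1 - y) + N)) atTop (𝓝 0) := by
    apply squeeze_zero_norm' ?_ tendsto_one_div_atTop_nhds_zero_nat
    filter_upwards [eventually_ge_atTop 1] with N hN
    have hN0 : (0:ℝ) < N := by exact_mod_cast hN
    have hrec := psi_rec hN0
    have m1 : psi (y + N) ≤ psi ((N : ℝ) + 1) :=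
      psi_mono (mem_Ioi.2 (by have := Nat.cast_nonneg (α := ℝ) N; linarith)) (mem_Ioi.2 (by have := Nat.cast_nonneg (α := ℝ) N; linarith)) (by linarith)
    have m2 : psi (N : ℝ) ≤ psi (y + N) :=
      psi_mono (mem_Ioi.2 hN0) (mem_Ioi.2 (by have := Nat.cast_nonneg (α := ℝ) N; linarith)) (by linarith)
    have m3 : psi ((1 - y) + N) ≤ psi ((N : ℝ) + 1) :=
      psi_mono (mem_Ioi.2 (by have := Nat.cast_nonneg (α := ℝ) N; linarith)) (mem_Ioi.2 (by have := Nat.cast_nonneg (α := ℝ) N; linarith)) (by linarith)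
    have m4 : psi (N : ℝ) ≤ psi ((1 - y) + N) :=
      psi_mono (mem_Ioi.2 hN0) (mem_Ioi.2 (by have := Nat.cast_nonneg (α := ℝ) N; linarith)) (by linarith)
    rw [Real.norm_eq_abs, abs_le]
    constructor <;> [linarith; linarith]
  refine Tendsto.congr (fun N => (hps N).symm) ?_
  rw [← hrefl]
  simpa using hlim.const_add (psi (1 - y) - psi y)

lemma integrableOn_rpow_Ioo {c : ℝ} (hc : -1 < c) :
    IntegrableOn (fun t : ℝ => t ^ c) (Set.Ioo 0 1) := by
  have := intervalIntegral.intervalIntegrable_rpow' (a := 0) (b := 1) (r := c) hc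
  rw [intervalIntegrable_iff_integrableOn_Ioc_of_le (by norm_num)] at this
  exact this.mono_set Set.Ioo_subset_Ioc_self

lemma integral_rpow_Ioo {c : ℝ} (hc : -1 < c) :
    ∫ t in Set.Ioo (0:ℝ) 1, t ^ c = 1 / (c + 1) := by
  rw [← integral_Ioc_eq_integral_Ioo,
    ← intervalIntegral.integral_of_le (by norm_num : (0:ℝ) ≤ 1),
    integral_rpow (Or.inl hc), Real.one_rpow, Real.zero_rpow (by linarith)]
  norm_num

lemma val_Ioo {a b : ℝ} (ha : a ∈ Set.Ioo (-1:ℝ) 0) (hb : b ∈ Set.Ioo (-1:ℝ) 0) (hba : b ≤ a) :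
    ∫ t in Set.Ioo (0:ℝ) 1, (t ^ a - t ^ b) / (t - 1)
      = ∑' n : ℕ, (1 / ((n : ℝ) + (1 + b)) - 1 / ((n : ℝ) + (1 + a))) := by
  set F : ℕ → ℝ → ℝ := fun n t => t ^ ((n : ℝ) + b) - t ^ ((n : ℝ) + a) with hF
  have hbpos : (0:ℝ) < 1 + b := by linarith [hb.1]
  have hapos : (0:ℝ) < 1 + a := by linarith [ha.1]
  have h_int : ∀ n : ℕ, Integrable (F n) (volume.restrict (Set.Ioo (0:ℝ) 1)) := by
    intro n
    exact (integrableOn_rpow_Ioo (by push_cast; linarith [hb.1, Nat.cast_nonneg (α := ℝ) n])).sub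
      (integrableOn_rpow_Ioo (by push_cast; linarith [ha.1, Nat.cast_nonneg (α := ℝ) n]))
  have hval : ∀ n : ℕ, ∫ t in Set.Ioo (0:ℝ) 1, F n t
      = 1 / ((n : ℝ) + (1 + b)) - 1 / ((n : ℝ) + (1 + a)) := by
    intro n
    rw [integral_sub (integrableOn_rpow_Ioo (by linarith [Nat.cast_nonneg (α := ℝ) n, hb.1]))
        (integrableOn_rpow_Ioo (by linarith [Nat.cast_nonneg (α := ℝ) n, ha.1])),
      integral_rpow_Ioo (by linarith [Nat.cast_nonneg (α := ℝ) n, hb.1]),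
      integral_rpow_Ioo (by linarith [Nat.cast_nonneg (α := ℝ) n, ha.1])]
    ring_nf
  have hnonneg : ∀ n : ℕ, ∀ t ∈ Set.Ioo (0:ℝ) 1, 0 ≤ F n t := by
    intro n t ht
    have : t ^ ((n : ℝ) + a) ≤ t ^ ((n : ℝ) + b) :=
      Real.rpow_le_rpow_of_exponent_ge ht.1 ht.2.le (by linarith)
    simp [hF]; linarith
  have hnorm : ∀ n : ℕ, ∫ t in Set.Ioo (0:ℝ) 1, ‖F n t‖
      = 1 / ((n : ℝ) + (1 + b)) - 1 / ((n : ℝ) + (1 + a)) := by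
    intro n
    rw [← hval n]
    refine setIntegral_congr_fun measurableSet_Ioo fun t ht => ?_
    exact Real.norm_of_nonneg (hnonneg n t ht)
  have hsum : Summable (fun n : ℕ => ∫ t in Set.Ioo (0:ℝ) 1, ‖F n t‖) := by
    rw [funext hnorm]
    exact summable_diff hbpos hapos
  have swap := integral_tsum_of_summable_integral_norm h_int hsum
  have hpt : ∀ t ∈ Set.Ioo (0:ℝ) 1, ∑' n : ℕ, F n t = (t ^ a - t ^ b) / (t - 1) := by
    intro t ht
    have ht0 := ht.1
    have ht1 := ht.2
    have hgb : HasSum (fun n : ℕ => t ^ ((n : ℝ) + b)) (t ^ b * (1 - t)⁻¹) := by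
      have := (hasSum_geometric_of_lt_one ht0.le ht1).mul_left (t ^ b)
      refine this.congr_fun fun n => ?_
      rw [← Real.rpow_natCast t n, ← Real.rpow_add ht0, add_comm]
    have hga : HasSum (fun n : ℕ => t ^ ((n : ℝ) + a)) (t ^ a * (1 - t)⁻¹) := by
      have := (hasSum_geometric_of_lt_one ht0.le ht1).mul_left (t ^ a)
      refine this.congr_fun fun n => ?_
      rw [← Real.rpow_natCast t n, ← Real.rpow_add ht0, add_comm]
    rw [(hgb.sub hga).tsum_eq]
    have h1t : (1:ℝ) - t ≠ 0 := by linarith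
    have ht1' : t - 1 ≠ 0 := by intro h; apply h1t; linarith
    field_simp
    ring
  calc ∫ t in Set.Ioo (0:ℝ) 1, (t ^ a - t ^ b) / (t - 1)
      = ∫ t in Set.Ioo (0:ℝ) 1, ∑' n : ℕ, F n t :=
        (setIntegral_congr_fun measurableSet_Ioo fun t ht => (hpt t ht).symm)
    _ = ∑' n : ℕ, ∫ t in Set.Ioo (0:ℝ) 1, F n t := swap.symm
    _ = ∑' n : ℕ, (1 / ((n : ℝ) + (1 + b)) - 1 / ((n : ℝ) + (1 + a))) := by
        exact tsum_congr hval

lemma integral_rpow_Ioi {c : ℝ} (hc : c < -1) :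
    ∫ t in Set.Ioi (1:ℝ), t ^ c = 1 / (-c - 1) := by
  rw [integral_Ioi_rpow_of_lt hc one_pos, Real.one_rpow,
    show -c - 1 = -(c+1) by ring, div_neg, ← neg_div]

lemma val_Ioi {a b : ℝ} (ha : a ∈ Set.Ioo (-1:ℝ) 0) (hb : b ∈ Set.Ioo (-1:ℝ) 0) (hba : b ≤ a) :
    ∫ t in Set.Ioi (1:ℝ), (t ^ a - t ^ b) / (t - 1)
      = ∑' n : ℕ, (1 / ((n : ℝ) + (-a)) - 1 / ((n : ℝ) + (-b))) := by
  set F : ℕ → ℝ → ℝ := fun n t => t ^ (a - ((n : ℝ) + 1)) - t ^ (b - ((n : ℝ) + 1)) with hF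
  have hexp : ∀ (c : ℝ), c < 0 → ∀ n : ℕ, c - ((n : ℝ) + 1) < -1 := by
    intro c hc n; have := Nat.cast_nonneg (α := ℝ) n; linarith
  have h_int : ∀ n : ℕ, Integrable (F n) (volume.restrict (Set.Ioi (1:ℝ))) := fun n =>
    (integrableOn_Ioi_rpow_of_lt (hexp a ha.2 n) one_pos).sub
      (integrableOn_Ioi_rpow_of_lt (hexp b hb.2 n) one_pos)
  have hval : ∀ n : ℕ, ∫ t in Set.Ioi (1:ℝ), F n t
      = 1 / ((n : ℝ) + (-a)) - 1 / ((n : ℝ) + (-b)) := by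
    intro n
    rw [integral_sub (integrableOn_Ioi_rpow_of_lt (hexp a ha.2 n) one_pos)
        (integrableOn_Ioi_rpow_of_lt (hexp b hb.2 n) one_pos),
      integral_rpow_Ioi (hexp a ha.2 n), integral_rpow_Ioi (hexp b hb.2 n)]
    ring_nf
  have hnonneg : ∀ n : ℕ, ∀ t ∈ Set.Ioi (1:ℝ), 0 ≤ F n t := by
    intro n t ht
    have : t ^ (b - ((n : ℝ) + 1)) ≤ t ^ (a - ((n : ℝ) + 1)) :=
      Real.rpow_le_rpow_of_exponent_le (le_of_lt ht) (by linarith)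
    simp only [hF]; linarith
  have hnorm : ∀ n : ℕ, ∫ t in Set.Ioi (1:ℝ), ‖F n t‖
      = 1 / ((n : ℝ) + (-a)) - 1 / ((n : ℝ) + (-b)) := by
    intro n
    rw [← hval n]
    exact setIntegral_congr_fun measurableSet_Ioi fun t ht => Real.norm_of_nonneg (hnonneg n t ht)
  have hsum : Summable (fun n : ℕ => ∫ t in Set.Ioi (1:ℝ), ‖F n t‖) := by
    rw [funext hnorm]
    exact summable_diff (by linarith [ha.2]) (by linarith [hb.2])
  have swap := integral_tsum_of_summable_integral_norm h_int hsum
  have hpt : ∀ t ∈ Set.Ioi (1:ℝ), ∑' n : ℕ, F n t = (t ^ a - t ^ b) / (t - 1) := by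
    intro t ht
    rw [Set.mem_Ioi] at ht
    have ht0 : (0:ℝ) < t := by linarith
    have htinv : t⁻¹ < 1 := inv_lt_one_of_one_lt₀ ht
    have hgeo : ∀ c : ℝ, HasSum (fun n : ℕ => t ^ (c - ((n : ℝ) + 1)))
        (t ^ c * t⁻¹ * (1 - t⁻¹)⁻¹) := by
      intro c
      have := (hasSum_geometric_of_lt_one (by positivity) htinv).mul_left (t ^ c * t⁻¹)
      refine this.congr_fun fun n => ?_
      rw [Real.rpow_sub ht0, Real.rpow_add ht0, Real.rpow_one, Real.rpow_natCast, inv_pow]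
      field_simp
    rw [((hgeo a).sub (hgeo b)).tsum_eq]
    have ht1' : t - 1 ≠ 0 := by intro h; linarith
    have h1t : 1 - t⁻¹ ≠ 0 := by
      intro h; apply ht1'
      field_simp at h
      linarith
    field_simp
  calc ∫ t in Set.Ioi (1:ℝ), (t ^ a - t ^ b) / (t - 1)
      = ∫ t in Set.Ioi (1:ℝ), ∑' n : ℕ, F n t :=
        (setIntegral_congr_fun measurableSet_Ioi fun t ht => (hpt t ht).symm)
    _ = ∑' n : ℕ, ∫ t in Set.Ioi (1:ℝ), F n t := swap.symm
    _ = ∑' n : ℕ, (1 / ((n : ℝ) + (-a)) - 1 / ((n : ℝ) + (-b))) := tsum_congr hval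

lemma integrable_aux {a b : ℝ} (ha : a ∈ Set.Ioo (-1:ℝ) 0) (hb : b ∈ Set.Ioo (-1:ℝ) 0)
    (hba : b ≤ a) :
    IntegrableOn (fun t : ℝ => (t ^ a - t ^ b) / (t - 1)) (Set.Ioi 0) := by
  have hm : Measurable (fun t : ℝ => (t ^ a - t ^ b) / (t - 1)) := by fun_prop
  have h1 : IntegrableOn (fun t : ℝ => (t ^ a - t ^ b) / (t - 1)) (Set.Ioc 0 1) := by
    have hg : IntegrableOn (fun t : ℝ => t ^ b) (Set.Ioc 0 1) := by
      have := intervalIntegral.intervalIntegrable_rpow' (a := 0) (b := 1) (r := b) hb.1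
      rwa [intervalIntegrable_iff_integrableOn_Ioc_of_le (by norm_num)] at this
    refine Integrable.mono hg hm.aestronglyMeasurable.restrict ?_
    rw [ae_restrict_iff' measurableSet_Ioc]
    refine ae_of_all _ fun t ht => ?_
    rcases eq_or_lt_of_le ht.2 with h1 | h1
    · rw [h1]; simp
    · have ht0 := ht.1
      have key1 : t ^ a ≤ t ^ b := Real.rpow_le_rpow_of_exponent_ge ht0 h1.le hba
      have key2 : t ^ (b + 1) ≤ t ^ a :=
        Real.rpow_le_rpow_of_exponent_ge ht0 h1.le (by linarith [ha.2, hb.1])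
      have htb1 : t ^ (b + 1) = t ^ b * t := by rw [Real.rpow_add ht0, Real.rpow_one]
      have hfeq : (t ^ a - t ^ b) / (t - 1) = (t ^ b - t ^ a) / (1 - t) := by
        rw [← neg_div_neg_eq]; ring_nf
      rw [hfeq, Real.norm_of_nonneg (div_nonneg (by linarith) (by linarith)),
        Real.norm_of_nonneg (Real.rpow_nonneg ht0.le b), div_le_iff₀ (by linarith)]
      nlinarith [Real.rpow_nonneg ht0.le b]
  have h2 : IntegrableOn (fun t : ℝ => (t ^ a - t ^ b) / (t - 1)) (Set.Ioi 1) := by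
    have hg : IntegrableOn (fun t : ℝ => t ^ (a - 1)) (Set.Ioi 1) :=
      integrableOn_Ioi_rpow_of_lt (by linarith [ha.2]) one_pos
    refine Integrable.mono hg hm.aestronglyMeasurable.restrict ?_
    rw [ae_restrict_iff' measurableSet_Ioi]
    refine ae_of_all _ fun t ht => ?_
    rw [Set.mem_Ioi] at ht
    have ht0 : (0:ℝ) < t := by linarith
    have key1 : t ^ b ≤ t ^ a := Real.rpow_le_rpow_of_exponent_le ht.le hba
    have key2 : t ^ (a - 1) ≤ t ^ b :=
      Real.rpow_le_rpow_of_exponent_le ht.le (by linarith [ha.2, hb.1])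
    have hta1 : t ^ (a - 1) * t = t ^ a := by
      have h := Real.rpow_add ht0 (a - 1) 1
      rw [Real.rpow_one, show a - 1 + 1 = a by ring] at h
      exact h.symm
    rw [Real.norm_of_nonneg (div_nonneg (by linarith) (by linarith)),
      Real.norm_of_nonneg (Real.rpow_nonneg ht0.le _), div_le_iff₀ (by linarith)]
    nlinarith [Real.rpow_nonneg ht0.le (a - 1)]
  have := h1.union h2
  rwa [Set.Ioc_union_Ioi_eq_Ioi zero_le_one] at this


lemma cot_neg' (x : ℝ) : Real.cot (-x) = -Real.cot x := by
  rw [Real.cot_eq_cos_div_sin, Real.cot_eq_cos_div_sin, Real.cos_neg, Real.sin_neg, div_neg]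

lemma main_aux {a b : ℝ} (ha : a ∈ Set.Ioo (-1:ℝ) 0) (hb : b ∈ Set.Ioo (-1:ℝ) 0) (hba : b ≤ a) :
    IntegrableOn (fun t : ℝ => (t ^ a - t ^ b) / (t - 1)) (Set.Ioi 0) ∧
    ∫ t in Set.Ioi (0:ℝ), (t ^ a - t ^ b) / (t - 1) =
      π * (Real.cot (π * b) - Real.cot (π * a)) := by
  have hint := integrable_aux ha hb hba
  refine ⟨hint, ?_⟩
  have h1 : IntegrableOn (fun t : ℝ => (t ^ a - t ^ b) / (t - 1)) (Set.Ioc 0 1) :=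
    hint.mono_set Set.Ioc_subset_Ioi_self
  have h2 : IntegrableOn (fun t : ℝ => (t ^ a - t ^ b) / (t - 1)) (Set.Ioi 1) :=
    hint.mono_set (Set.Ioi_subset_Ioi zero_le_one)
  have hsplit : ∫ t in Set.Ioi (0:ℝ), (t ^ a - t ^ b) / (t - 1)
      = (∫ t in Set.Ioc (0:ℝ) 1, (t ^ a - t ^ b) / (t - 1))
        + ∫ t in Set.Ioi (1:ℝ), (t ^ a - t ^ b) / (t - 1) := by
    rw [← Set.Ioc_union_Ioi_eq_Ioi (zero_le_one (α := ℝ)),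
      setIntegral_union Set.Ioc_disjoint_Ioi_same measurableSet_Ioi h1 h2]
  rw [hsplit, integral_Ioc_eq_integral_Ioo, val_Ioo ha hb hba, val_Ioi ha hb hba]
  have ha1 : (0:ℝ) < 1 + a := by linarith [ha.1]
  have hb1 : (0:ℝ) < 1 + b := by linarith [hb.1]
  have hna : (0:ℝ) < -a := by linarith [ha.2]
  have hnb : (0:ℝ) < -b := by linarith [hb.2]
  have hA : Summable (fun n : ℕ => 1 / ((n : ℝ) + (1 + b)) - 1 / ((n : ℝ) + (1 + a))) :=
    summable_diff hb1 ha1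
  have hB : Summable (fun n : ℕ => 1 / ((n : ℝ) + (-a)) - 1 / ((n : ℝ) + (-b))) :=
    summable_diff hna hnb
  have hsa : Summable (fun n : ℕ => 1 / ((n : ℝ) + (-a)) - 1 / ((n : ℝ) + (1 + a))) :=
    summable_diff hna ha1
  have hsb : Summable (fun n : ℕ => 1 / ((n : ℝ) + (-b)) - 1 / ((n : ℝ) + (1 + b))) :=
    summable_diff hnb hb1
  rw [← Summable.tsum_add hA hB]
  have hre : ∀ n : ℕ, (1 / ((n : ℝ) + (1 + b)) - 1 / ((n : ℝ) + (1 + a)))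
      + (1 / ((n : ℝ) + (-a)) - 1 / ((n : ℝ) + (-b)))
      = (1 / ((n : ℝ) + (-a)) - 1 / ((n : ℝ) + (1 + a)))
        - (1 / ((n : ℝ) + (-b)) - 1 / ((n : ℝ) + (1 + b))) := fun n => by ring
  rw [tsum_congr hre, Summable.tsum_sub hsa hsb]
  have hta : ∑' n : ℕ, (1 / ((n : ℝ) + (-a)) - 1 / ((n : ℝ) + (1 + a)))
      = π * Real.cot (π * (-a)) := by
    have := (hasSum_cot hna (by linarith [ha.1])).tsum_eq
    rw [← this]
    exact tsum_congr fun n => by norm_num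
  have htb : ∑' n : ℕ, (1 / ((n : ℝ) + (-b)) - 1 / ((n : ℝ) + (1 + b)))
      = π * Real.cot (π * (-b)) := by
    have := (hasSum_cot hnb (by linarith [hb.1])).tsum_eq
    rw [← this]
    exact tsum_congr fun n => by norm_num
  rw [hta, htb, show π * -a = -(π * a) by ring, show π * -b = -(π * b) by ring,
    cot_neg', cot_neg']
  ring

end AuxiliaryLemmas

/-- For `−1 < a < 0` and `−1 < b < 0`, the integral `∫₀^∞ (t^a − t^b)/(t − 1) dt`
converges and equals `π(cot(πb) − cot(πa))`. -/
theorem cot_integral (a b : ℝ) (ha : a ∈ Set.Ioo (-1 : ℝ) 0) (hb : b ∈ Set.Ioo (-1 : ℝ) 0) :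
    IntegrableOn (fun t : ℝ => (t ^ a - t ^ b) / (t - 1)) (Set.Ioi 0) ∧
    ∫ t in Set.Ioi (0 : ℝ), (t ^ a - t ^ b) / (t - 1) =
      π * (Real.cot (π * b) - Real.cot (π * a)) := by
  rcases le_total b a with hba | hab
  · exact main_aux ha hb hba
  · obtain ⟨hint, hval⟩ := main_aux hb ha hab
    have hfe : (fun t : ℝ => (t ^ a - t ^ b) / (t - 1))
        = fun t : ℝ => -((t ^ b - t ^ a) / (t - 1)) := by
      funext t; ring
    constructor
    · rw [hfe]; exact hint.neg
    · rw [hfe, integral_neg, hval]; ring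
end

section
/- The unique solution ξ ∈ (1/4, 2/3) of the equation √(36ξ+3)/4 + sin(2π√(12ξ+1)/3) = 0 satisfies 0.3566668367128 < ξ < 0.3566668367129. -/
open Real

noncomputable def fB (ξ : ℝ) : ℝ :=
  Real.sqrt (36 * ξ + 3) / 4 + Real.sin (2 * π * Real.sqrt (12 * ξ + 1) / 3)

noncomputable def gg (θ : ℝ) : ℝ := 3 * Real.sqrt 3 / (8 * π) * θ + Real.sin θ

lemma fB_eq_gg (ξ : ℝ) (h : (0:ℝ) ≤ 12 * ξ + 1) :
    fB ξ = gg (2 * π * Real.sqrt (12 * ξ + 1) / 3) := by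
  unfold fB gg
  have h3 : Real.sqrt (36 * ξ + 3) = Real.sqrt 3 * Real.sqrt (12 * ξ + 1) := by
    rw [show (36 * ξ + 3 : ℝ) = 3 * (12 * ξ + 1) by ring]
    exact Real.sqrt_mul (by norm_num) _
  rw [h3]
  have hπ : π ≠ 0 := Real.pi_ne_zero
  field_simp
  ring

lemma gg_cont : Continuous gg := by
  unfold gg
  exact (continuous_const.mul continuous_id).add Real.continuous_sin

lemma gg_hasDeriv (θ : ℝ) :
    HasDerivAt gg (3 * Real.sqrt 3 / (8 * π) + Real.cos θ) θ := by
  unfold gg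
  exact (((hasDerivAt_id' θ).const_mul (3 * Real.sqrt 3 / (8 * π))).add
    (Real.hasDerivAt_sin θ)).congr_deriv (by ring)

lemma gg_deriv : deriv gg = fun θ => 3 * Real.sqrt 3 / (8 * π) + Real.cos θ :=
  funext fun θ => (gg_hasDeriv θ).deriv

lemma gg_deriv2 (θ : ℝ) : deriv (deriv gg) θ = -Real.sin θ := by
  rw [gg_deriv]
  simpa using ((hasDerivAt_const θ (3 * Real.sqrt 3 / (8 * π))).add
    (Real.hasDerivAt_cos θ)).deriv

lemma gg_convex : StrictConvexOn ℝ (Set.Icc (4 * π / 3) (22 * π / 15)) gg := by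
  have hpi := Real.pi_pos
  apply strictConvexOn_of_deriv2_pos (convex_Icc _ _) gg_cont.continuousOn
  intro θ hθ
  rw [interior_Icc] at hθ
  have h2 : deriv^[2] gg θ = -Real.sin θ := by
    rw [show deriv^[2] gg = deriv (deriv gg) by rfl]
    exact gg_deriv2 θ
  rw [h2]
  have hs : Real.sin θ = Real.sin (θ - 2 * π) := (Real.sin_sub_two_pi θ).symm
  have hneg : Real.sin (θ - 2 * π) < 0 := by
    apply Real.sin_neg_of_neg_of_neg_pi_lt
    · nlinarith [hθ.2]
    · nlinarith [hθ.1]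
  linarith [hs ▸ hneg]

lemma sin_pi_div_30_lt : Real.sin (π / 30) < 3 * Real.sqrt 3 / (8 * π) := by
  have hpi := Real.pi_pos
  have hlt : Real.sin (π / 30) < π / 30 := Real.sin_lt (by positivity)
  have hs3 : (1.7 : ℝ) < Real.sqrt 3 := by
    nlinarith [Real.sq_sqrt (by norm_num : (0:ℝ) ≤ 3), Real.sqrt_nonneg 3]
  have hp4 : π < 4 := Real.pi_lt_four
  have : π / 30 < 3 * Real.sqrt 3 / (8 * π) := by
    rw [div_lt_div_iff₀ (by norm_num) (by positivity)]
    nlinarith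
  linarith

lemma gg_mono : StrictMonoOn gg (Set.Icc (22 * π / 15) (2 * π)) := by
  have hpi := Real.pi_pos
  apply strictMonoOn_of_deriv_pos (convex_Icc _ _) gg_cont.continuousOn
  intro θ hθ
  rw [interior_Icc] at hθ
  rw [gg_deriv]
  have h1 : Real.cos θ = Real.cos (2 * π - θ) := (Real.cos_two_pi_sub θ).symm
  have h2 : Real.cos (8 * π / 15) ≤ Real.cos (2 * π - θ) := by
    apply Real.cos_le_cos_of_nonneg_of_le_pi
    · linarith [hθ.2]
    · linarith
    · linarith [hθ.1]
  have h3 : Real.cos (8 * π / 15) = -Real.sin (π / 30) := by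
    rw [show (8:ℝ) * π / 15 = π / 2 + π / 30 by ring, Real.cos_add]
    simp
  have h4 := sin_pi_div_30_lt
  simp only []
  rw [h1]
  linarith [h3 ▸ h2]

lemma gg_at_left : gg (4 * π / 3) = 0 := by
  unfold gg
  have h1 : Real.sin (4 * π / 3) = -Real.sin (π / 3) := by
    rw [show (4:ℝ) * π / 3 = π / 3 + π by ring, Real.sin_add_pi]
  rw [h1, Real.sin_pi_div_three]
  have hπ : π ≠ 0 := Real.pi_ne_zero
  field_simp
  ring

lemma cos_pi_div_30_gt : (0.994 : ℝ) < Real.cos (π / 30) := by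
  have hpi := Real.pi_pos
  have hp : π < 3.15 := by
    have := Real.pi_lt_d20; linarith
  have habs : |π / 30| = π / 30 := abs_of_pos (by positivity)
  have hb := abs_le.1 (Real.cos_bound (x := π / 30) (by rw [habs]; nlinarith))
  rw [habs] at hb
  have hp2 : π ^ 2 < 9.9225 := by nlinarith
  have hp4 : π ^ 4 < 98.5 := by nlinarith [hp2, sq_nonneg π]
  nlinarith [hb.1, hp2, hp4, hpi]

lemma gg_at_mid : gg (22 * π / 15) < 0 := by
  unfold gg
  have h1 : Real.sin (22 * π / 15) = -Real.cos (π / 30) := by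
    rw [show (22:ℝ) * π / 15 = (π / 2 - π / 30) + π by ring, Real.sin_add_pi,
      Real.sin_pi_div_two_sub]
  rw [h1]
  have hc : 3 * Real.sqrt 3 / (8 * π) * (22 * π / 15) = 11 * Real.sqrt 3 / 20 := by
    have hπ : π ≠ 0 := Real.pi_ne_zero
    field_simp
    ring
  rw [hc]
  have hs3 : Real.sqrt 3 < 1.7321 := by
    nlinarith [Real.sq_sqrt (by norm_num : (0:ℝ) ≤ 3), Real.sqrt_nonneg 3]
  have := cos_pi_div_30_gt
  nlinarith

lemma gg_neg (θ : ℝ) (h1 : 4 * π / 3 < θ) (h2 : θ ≤ 22 * π / 15) : gg θ < 0 := by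
  have hpi := Real.pi_pos
  rcases eq_or_lt_of_le h2 with heq | hlt
  · rw [heq]; exact gg_at_mid
  · set a : ℝ := (22 * π / 15 - θ) / (2 * π / 15) with ha_def
    set b : ℝ := (θ - 4 * π / 3) / (2 * π / 15) with hb_def
    have hden : (0:ℝ) < 2 * π / 15 := by positivity
    have ha : 0 < a := by apply div_pos; linarith; exact hden
    have hb : 0 < b := by apply div_pos; linarith; exact hden
    have hab : a + b = 1 := by
      rw [ha_def, hb_def, ← add_div, div_eq_one_iff_eq (by positivity)]
      ring
    have hcomb : a • (4 * π / 3) + b • (22 * π / 15) = θ := by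
      rw [smul_eq_mul, smul_eq_mul, ha_def, hb_def]
      field_simp
      ring
    have hmem1 : (4 * π / 3) ∈ Set.Icc (4 * π / 3) (22 * π / 15) := by
      constructor <;> [exact le_refl _; nlinarith]
    have hmem2 : (22 * π / 15) ∈ Set.Icc (4 * π / 3) (22 * π / 15) := by
      constructor <;> [nlinarith; exact le_refl _]
    have hne : (4 * π / 3) ≠ (22 * π / 15) := by
      intro h; nlinarith
    have := gg_convex.2 hmem1 hmem2 hne ha hb hab
    rw [hcomb, gg_at_left, smul_eq_mul, smul_eq_mul, mul_zero, zero_add] at this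
    nlinarith [gg_at_mid]

lemma sqrt_bounds_of (R l h : ℝ) (hl : 0 ≤ l) (hh : 0 ≤ h) (h1 : l ^ 2 < R) (h2 : R < h ^ 2) :
    l < Real.sqrt R ∧ Real.sqrt R < h := by
  have hR : (0:ℝ) ≤ R := by nlinarith
  have hu := Real.sq_sqrt hR
  have hu0 := Real.sqrt_nonneg R
  constructor <;> nlinarith

lemma theta_mem (ξ : ℝ) (h1 : (0.32:ℝ) ≤ ξ) (h2 : ξ ≤ 2/3) :
    2 * π * Real.sqrt (12 * ξ + 1) / 3 ∈ Set.Icc (22 * π / 15) (2 * π) := by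
  have hpi := Real.pi_pos
  have hR : (0:ℝ) ≤ 12 * ξ + 1 := by linarith
  have hu := Real.sq_sqrt hR
  have hu0 := Real.sqrt_nonneg (12 * ξ + 1)
  have hul : (2.2:ℝ) ≤ Real.sqrt (12 * ξ + 1) := by nlinarith
  have huh : Real.sqrt (12 * ξ + 1) ≤ 3 := by nlinarith
  constructor <;> nlinarith

lemma fB_neg_left (ξ : ℝ) (h1 : (1/4:ℝ) < ξ) (h2 : ξ ≤ 0.32) : fB ξ < 0 := by
  have hpi := Real.pi_pos
  have hR : (0:ℝ) ≤ 12 * ξ + 1 := by linarith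
  rw [fB_eq_gg ξ hR]
  have hu := Real.sq_sqrt hR
  have hu0 := Real.sqrt_nonneg (12 * ξ + 1)
  have hul : (2:ℝ) < Real.sqrt (12 * ξ + 1) := by nlinarith
  have huh : Real.sqrt (12 * ξ + 1) ≤ 2.2 := by nlinarith
  apply gg_neg <;> nlinarith

lemma fB_mono (ξ₁ ξ₂ : ℝ) (h1 : (0.32:ℝ) ≤ ξ₁) (h2 : ξ₁ < ξ₂) (h3 : ξ₂ ≤ 2/3) :
    fB ξ₁ < fB ξ₂ := by
  have hpi := Real.pi_pos
  rw [fB_eq_gg ξ₁ (by linarith), fB_eq_gg ξ₂ (by linarith)]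
  apply gg_mono (theta_mem ξ₁ h1 (by linarith)) (theta_mem ξ₂ (by linarith) h3)
  have hs := Real.sqrt_lt_sqrt (by linarith : (0:ℝ) ≤ 12 * ξ₁ + 1)
    (by linarith : 12 * ξ₁ + 1 < 12 * ξ₂ + 1)
  nlinarith

lemma sin_as_cos (θ : ℝ) : Real.sin θ = -Real.cos (θ - 3 * π / 2) := by
  have h : Real.cos (θ - 3 * π / 2) = -Real.sin θ := by
    rw [show θ - 3 * π / 2 = (θ - π / 2) - π by ring, Real.cos_sub_pi,
      Real.cos_sub_pi_div_two]
  linarith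

lemma chL_base_lo : (0.999999999998831990281255653259 : ℝ) ≤ Real.cos ((0.100165498485415692818 : ℝ) / 2 ^ 16) := by
  have habs : |((0.100165498485415692818 : ℝ) / 2 ^ 16)| = (0.100165498485415692818 : ℝ) / 2 ^ 16 := abs_of_pos (by norm_num)
  have hb := abs_le.1 (Real.cos_bound (x := (0.100165498485415692818 : ℝ) / 2 ^ 16) (by rw [habs]; norm_num))
  rw [habs] at hb
  nlinarith [hb.1, hb.2]
lemma chL_lo_15 : (0.999999999995327961125025341529 : ℝ) ≤ Real.cos ((0.100165498485415692818 : ℝ) / 2 ^ 15) := by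
  have h2 := Real.cos_two_mul ((0.100165498485415692818 : ℝ) / 2 ^ 16)
  rw [show (2:ℝ) * ((0.100165498485415692818 : ℝ) / 2 ^ 16) = (0.100165498485415692818 : ℝ) / 2 ^ 15 by ring] at h2
  rw [h2]
  nlinarith [chL_base_lo]
lemma chL_lo_14 : (0.999999999981311844500145022010 : ℝ) ≤ Real.cos ((0.100165498485415692818 : ℝ) / 2 ^ 14) := by
  have h2 := Real.cos_two_mul ((0.100165498485415692818 : ℝ) / 2 ^ 15)
  rw [show (2:ℝ) * ((0.100165498485415692818 : ℝ) / 2 ^ 15) = (0.100165498485415692818 : ℝ) / 2 ^ 14 by ring] at h2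
  rw [h2]
  nlinarith [chL_lo_15]
lemma chL_lo_13 : (0.999999999925247378001278582351 : ℝ) ≤ Real.cos ((0.100165498485415692818 : ℝ) / 2 ^ 13) := by
  have h2 := Real.cos_two_mul ((0.100165498485415692818 : ℝ) / 2 ^ 14)
  rw [show (2:ℝ) * ((0.100165498485415692818 : ℝ) / 2 ^ 14) = (0.100165498485415692818 : ℝ) / 2 ^ 13 by ring] at h2
  rw [h2]
  nlinarith [chL_lo_14]
lemma chL_lo_12 : (0.999999999700989512016290238395 : ℝ) ≤ Real.cos ((0.100165498485415692818 : ℝ) / 2 ^ 12) := by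
  have h2 := Real.cos_two_mul ((0.100165498485415692818 : ℝ) / 2 ^ 13)
  rw [show (2:ℝ) * ((0.100165498485415692818 : ℝ) / 2 ^ 13) = (0.100165498485415692818 : ℝ) / 2 ^ 12 by ring] at h2
  rw [h2]
  nlinarith [chL_lo_13]
lemma chL_lo_11 : (0.999999998803958048243975497428 : ℝ) ≤ Real.cos ((0.100165498485415692818 : ℝ) / 2 ^ 11) := by
  have h2 := Real.cos_two_mul ((0.100165498485415692818 : ℝ) / 2 ^ 12)
  rw [show (2:ℝ) * ((0.100165498485415692818 : ℝ) / 2 ^ 12) = (0.100165498485415692818 : ℝ) / 2 ^ 11 by ring] at h2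
  rw [h2]
  nlinarith [chL_lo_12]
lemma chL_lo_10 : (0.999999995215832195836934690432 : ℝ) ≤ Real.cos ((0.100165498485415692818 : ℝ) / 2 ^ 10) := by
  have h2 := Real.cos_two_mul ((0.100165498485415692818 : ℝ) / 2 ^ 11)
  rw [show (2:ℝ) * ((0.100165498485415692818 : ℝ) / 2 ^ 11) = (0.100165498485415692818 : ℝ) / 2 ^ 10 by ring] at h2
  rw [h2]
  nlinarith [chL_lo_11]
lemma chL_lo_9 : (0.999999980863328829124261918508 : ℝ) ≤ Real.cos ((0.100165498485415692818 : ℝ) / 2 ^ 9) := by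
  have h2 := Real.cos_two_mul ((0.100165498485415692818 : ℝ) / 2 ^ 10)
  rw [show (2:ℝ) * ((0.100165498485415692818 : ℝ) / 2 ^ 10) = (0.100165498485415692818 : ℝ) / 2 ^ 9 by ring] at h2
  rw [h2]
  nlinarith [chL_lo_10]
lemma chL_lo_8 : (0.999999923453316048921414678485 : ℝ) ≤ Real.cos ((0.100165498485415692818 : ℝ) / 2 ^ 8) := by
  have h2 := Real.cos_two_mul ((0.100165498485415692818 : ℝ) / 2 ^ 9)
  rw [show (2:ℝ) * ((0.100165498485415692818 : ℝ) / 2 ^ 9) = (0.100165498485415692818 : ℝ) / 2 ^ 8 by ring] at h2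
  rw [h2]
  nlinarith [chL_lo_9]
lemma chL_lo_7 : (0.999999693813275914475306526563 : ℝ) ≤ Real.cos ((0.100165498485415692818 : ℝ) / 2 ^ 7) := by
  have h2 := Real.cos_two_mul ((0.100165498485415692818 : ℝ) / 2 ^ 8)
  rw [show (2:ℝ) * ((0.100165498485415692818 : ℝ) / 2 ^ 8) = (0.100165498485415692818 : ℝ) / 2 ^ 7 by ring] at h2
  rw [h2]
  nlinarith [chL_lo_8]
lemma chL_lo_6 : (0.999998775253291158521238556706 : ℝ) ≤ Real.cos ((0.100165498485415692818 : ℝ) / 2 ^ 6) := by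
  have h2 := Real.cos_two_mul ((0.100165498485415692818 : ℝ) / 2 ^ 7)
  rw [show (2:ℝ) * ((0.100165498485415692818 : ℝ) / 2 ^ 7) = (0.100165498485415692818 : ℝ) / 2 ^ 6 by ring] at h2
  rw [h2]
  nlinarith [chL_lo_7]
lemma chL_lo_5 : (0.999995101016164643086590294725 : ℝ) ≤ Real.cos ((0.100165498485415692818 : ℝ) / 2 ^ 5) := by
  have h2 := Real.cos_two_mul ((0.100165498485415692818 : ℝ) / 2 ^ 6)
  rw [show (2:ℝ) * ((0.100165498485415692818 : ℝ) / 2 ^ 6) = (0.100165498485415692818 : ℝ) / 2 ^ 5 by ring] at h2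
  rw [h2]
  nlinarith [chL_lo_6]
lemma chL_lo_4 : (0.999980404112658657584537845448 : ℝ) ≤ Real.cos ((0.100165498485415692818 : ℝ) / 2 ^ 4) := by
  have h2 := Real.cos_two_mul ((0.100165498485415692818 : ℝ) / 2 ^ 5)
  rw [show (2:ℝ) * ((0.100165498485415692818 : ℝ) / 2 ^ 5) = (0.100165498485415692818 : ℝ) / 2 ^ 4 by ring] at h2
  rw [h2]
  nlinarith [chL_lo_5]
lemma chL_lo_3 : (0.999921617218632231727319221635 : ℝ) ≤ Real.cos ((0.100165498485415692818 : ℝ) / 2 ^ 3) := by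
  have h2 := Real.cos_two_mul ((0.100165498485415692818 : ℝ) / 2 ^ 4)
  rw [show (2:ℝ) * ((0.100165498485415692818 : ℝ) / 2 ^ 4) = (0.100165498485415692818 : ℝ) / 2 ^ 3 by ring] at h2
  rw [h2]
  nlinarith [chL_lo_4]
lemma chL_lo_2 : (0.999686481162249756803999062189 : ℝ) ≤ Real.cos ((0.100165498485415692818 : ℝ) / 2 ^ 2) := by
  have h2 := Real.cos_two_mul ((0.100165498485415692818 : ℝ) / 2 ^ 3)
  rw [show (2:ℝ) * ((0.100165498485415692818 : ℝ) / 2 ^ 3) = (0.100165498485415692818 : ℝ) / 2 ^ 2 by ring] at h2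
  rw [h2]
  nlinarith [chL_lo_3]
lemma chL_lo_1 : (0.998746121237122275742632483993 : ℝ) ≤ Real.cos ((0.100165498485415692818 : ℝ) / 2 ^ 1) := by
  have h2 := Real.cos_two_mul ((0.100165498485415692818 : ℝ) / 2 ^ 2)
  rw [show (2:ℝ) * ((0.100165498485415692818 : ℝ) / 2 ^ 2) = (0.100165498485415692818 : ℝ) / 2 ^ 1 by ring] at h2
  rw [h2]
  nlinarith [chL_lo_2]
lemma chL_lo_0 : (0.994987629372393094515040298173 : ℝ) ≤ Real.cos ((0.100165498485415692818 : ℝ)) := by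
  have h2 := Real.cos_two_mul ((0.100165498485415692818 : ℝ) / 2 ^ 1)
  rw [show (2:ℝ) * ((0.100165498485415692818 : ℝ) / 2 ^ 1) = (0.100165498485415692818 : ℝ) by ring] at h2
  rw [h2]
  nlinarith [chL_lo_1]
lemma chU_base_lo : (0.999999999998831990281242899121 : ℝ) ≤ Real.cos ((0.100165498485962573795 : ℝ) / 2 ^ 16) := by
  have habs : |((0.100165498485962573795 : ℝ) / 2 ^ 16)| = (0.100165498485962573795 : ℝ) / 2 ^ 16 := abs_of_pos (by norm_num)
  have hb := abs_le.1 (Real.cos_bound (x := (0.100165498485962573795 : ℝ) / 2 ^ 16) (by rw [habs]; norm_num))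
  rw [habs] at hb
  nlinarith [hb.1, hb.2]
lemma chU_base_hi : Real.cos ((0.100165498485962573795 : ℝ) / 2 ^ 16) ≤ (0.999999999998831990281243467559 : ℝ) := by
  have habs : |((0.100165498485962573795 : ℝ) / 2 ^ 16)| = (0.100165498485962573795 : ℝ) / 2 ^ 16 := abs_of_pos (by norm_num)
  have hb := abs_le.1 (Real.cos_bound (x := (0.100165498485962573795 : ℝ) / 2 ^ 16) (by rw [habs]; norm_num))
  rw [habs] at hb
  nlinarith [hb.1, hb.2]
lemma chU_lo_15 : (0.999999999995327961124974324977 : ℝ) ≤ Real.cos ((0.100165498485962573795 : ℝ) / 2 ^ 15) := by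
  have h2 := Real.cos_two_mul ((0.100165498485962573795 : ℝ) / 2 ^ 16)
  rw [show (2:ℝ) * ((0.100165498485962573795 : ℝ) / 2 ^ 16) = (0.100165498485962573795 : ℝ) / 2 ^ 15 by ring] at h2
  rw [h2]
  nlinarith [chU_base_lo]
lemma chU_hi_15 : Real.cos ((0.100165498485962573795 : ℝ) / 2 ^ 15) ≤ (0.999999999995327961124976598730 : ℝ) := by
  have h2 := Real.cos_two_mul ((0.100165498485962573795 : ℝ) / 2 ^ 16)
  rw [show (2:ℝ) * ((0.100165498485962573795 : ℝ) / 2 ^ 16) = (0.100165498485962573795 : ℝ) / 2 ^ 15 by ring] at h2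
  rw [h2]
  nlinarith [chU_base_lo, chU_base_hi]
lemma chU_lo_14 : (0.999999999981311844499940955802 : ℝ) ≤ Real.cos ((0.100165498485962573795 : ℝ) / 2 ^ 14) := by
  have h2 := Real.cos_two_mul ((0.100165498485962573795 : ℝ) / 2 ^ 15)
  rw [show (2:ℝ) * ((0.100165498485962573795 : ℝ) / 2 ^ 15) = (0.100165498485962573795 : ℝ) / 2 ^ 14 by ring] at h2
  rw [h2]
  nlinarith [chU_lo_15]
lemma chU_hi_14 : Real.cos ((0.100165498485962573795 : ℝ) / 2 ^ 14) ≤ (0.999999999981311844499950050815 : ℝ) := by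
  have h2 := Real.cos_two_mul ((0.100165498485962573795 : ℝ) / 2 ^ 15)
  rw [show (2:ℝ) * ((0.100165498485962573795 : ℝ) / 2 ^ 15) = (0.100165498485962573795 : ℝ) / 2 ^ 14 by ring] at h2
  rw [h2]
  nlinarith [chU_lo_15, chU_hi_15]
lemma chU_lo_13 : (0.999999999925247378000462317519 : ℝ) ≤ Real.cos ((0.100165498485962573795 : ℝ) / 2 ^ 13) := by
  have h2 := Real.cos_two_mul ((0.100165498485962573795 : ℝ) / 2 ^ 14)
  rw [show (2:ℝ) * ((0.100165498485962573795 : ℝ) / 2 ^ 14) = (0.100165498485962573795 : ℝ) / 2 ^ 13 by ring] at h2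
  rw [h2]
  nlinarith [chU_lo_14]
lemma chU_hi_13 : Real.cos ((0.100165498485962573795 : ℝ) / 2 ^ 13) ≤ (0.999999999925247378000498697572 : ℝ) := by
  have h2 := Real.cos_two_mul ((0.100165498485962573795 : ℝ) / 2 ^ 14)
  rw [show (2:ℝ) * ((0.100165498485962573795 : ℝ) / 2 ^ 14) = (0.100165498485962573795 : ℝ) / 2 ^ 13 by ring] at h2
  rw [h2]
  nlinarith [chU_lo_14, chU_hi_14]
lemma chU_lo_12 : (0.999999999700989512013025179067 : ℝ) ≤ Real.cos ((0.100165498485962573795 : ℝ) / 2 ^ 12) := by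
  have h2 := Real.cos_two_mul ((0.100165498485962573795 : ℝ) / 2 ^ 13)
  rw [show (2:ℝ) * ((0.100165498485962573795 : ℝ) / 2 ^ 13) = (0.100165498485962573795 : ℝ) / 2 ^ 12 by ring] at h2
  rw [h2]
  nlinarith [chU_lo_13]
lemma chU_hi_12 : Real.cos ((0.100165498485962573795 : ℝ) / 2 ^ 12) ≤ (0.999999999700989512013170699280 : ℝ) := by
  have h2 := Real.cos_two_mul ((0.100165498485962573795 : ℝ) / 2 ^ 13)
  rw [show (2:ℝ) * ((0.100165498485962573795 : ℝ) / 2 ^ 13) = (0.100165498485962573795 : ℝ) / 2 ^ 12 by ring] at h2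
  rw [h2]
  nlinarith [chU_lo_13, chU_hi_13]
lemma chU_lo_11 : (0.999999998803958048230915260120 : ℝ) ≤ Real.cos ((0.100165498485962573795 : ℝ) / 2 ^ 11) := by
  have h2 := Real.cos_two_mul ((0.100165498485962573795 : ℝ) / 2 ^ 12)
  rw [show (2:ℝ) * ((0.100165498485962573795 : ℝ) / 2 ^ 12) = (0.100165498485962573795 : ℝ) / 2 ^ 11 by ring] at h2
  rw [h2]
  nlinarith [chU_lo_12]
lemma chU_hi_11 : Real.cos ((0.100165498485962573795 : ℝ) / 2 ^ 11) ≤ (0.999999998803958048231497340973 : ℝ) := by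
  have h2 := Real.cos_two_mul ((0.100165498485962573795 : ℝ) / 2 ^ 12)
  rw [show (2:ℝ) * ((0.100165498485962573795 : ℝ) / 2 ^ 12) = (0.100165498485962573795 : ℝ) / 2 ^ 11 by ring] at h2
  rw [h2]
  nlinarith [chU_lo_12, chU_hi_12]
lemma chU_lo_10 : (0.999999995215832195784693741263 : ℝ) ≤ Real.cos ((0.100165498485962573795 : ℝ) / 2 ^ 10) := by
  have h2 := Real.cos_two_mul ((0.100165498485962573795 : ℝ) / 2 ^ 11)
  rw [show (2:ℝ) * ((0.100165498485962573795 : ℝ) / 2 ^ 11) = (0.100165498485962573795 : ℝ) / 2 ^ 10 by ring] at h2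
  rw [h2]
  nlinarith [chU_lo_11]
lemma chU_hi_10 : Real.cos ((0.100165498485962573795 : ℝ) / 2 ^ 10) ≤ (0.999999995215832195787022064673 : ℝ) := by
  have h2 := Real.cos_two_mul ((0.100165498485962573795 : ℝ) / 2 ^ 11)
  rw [show (2:ℝ) * ((0.100165498485962573795 : ℝ) / 2 ^ 11) = (0.100165498485962573795 : ℝ) / 2 ^ 10 by ring] at h2
  rw [h2]
  nlinarith [chU_lo_11, chU_hi_11]
lemma chU_lo_9 : (0.999999980863328828915298122832 : ℝ) ≤ Real.cos ((0.100165498485962573795 : ℝ) / 2 ^ 9) := by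
  have h2 := Real.cos_two_mul ((0.100165498485962573795 : ℝ) / 2 ^ 10)
  rw [show (2:ℝ) * ((0.100165498485962573795 : ℝ) / 2 ^ 10) = (0.100165498485962573795 : ℝ) / 2 ^ 9 by ring] at h2
  rw [h2]
  nlinarith [chU_lo_10]
lemma chU_hi_9 : Real.cos ((0.100165498485962573795 : ℝ) / 2 ^ 9) ≤ (0.999999980863328828924611416429 : ℝ) := by
  have h2 := Real.cos_two_mul ((0.100165498485962573795 : ℝ) / 2 ^ 10)
  rw [show (2:ℝ) * ((0.100165498485962573795 : ℝ) / 2 ^ 10) = (0.100165498485962573795 : ℝ) / 2 ^ 9 by ring] at h2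
  rw [h2]
  nlinarith [chU_lo_10, chU_hi_10]
lemma chU_lo_8 : (0.999999923453316048085559511776 : ℝ) ≤ Real.cos ((0.100165498485962573795 : ℝ) / 2 ^ 8) := by
  have h2 := Real.cos_two_mul ((0.100165498485962573795 : ℝ) / 2 ^ 9)
  rw [show (2:ℝ) * ((0.100165498485962573795 : ℝ) / 2 ^ 9) = (0.100165498485962573795 : ℝ) / 2 ^ 8 by ring] at h2
  rw [h2]
  nlinarith [chU_lo_9]
lemma chU_hi_8 : Real.cos ((0.100165498485962573795 : ℝ) / 2 ^ 8) ≤ (0.999999923453316048122812685452 : ℝ) := by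
  have h2 := Real.cos_two_mul ((0.100165498485962573795 : ℝ) / 2 ^ 9)
  rw [show (2:ℝ) * ((0.100165498485962573795 : ℝ) / 2 ^ 9) = (0.100165498485962573795 : ℝ) / 2 ^ 8 by ring] at h2
  rw [h2]
  nlinarith [chU_lo_9, chU_hi_9]
lemma chU_lo_7 : (0.999999693813275911131886115655 : ℝ) ≤ Real.cos ((0.100165498485962573795 : ℝ) / 2 ^ 7) := by
  have h2 := Real.cos_two_mul ((0.100165498485962573795 : ℝ) / 2 ^ 8)
  rw [show (2:ℝ) * ((0.100165498485962573795 : ℝ) / 2 ^ 8) = (0.100165498485962573795 : ℝ) / 2 ^ 7 by ring] at h2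
  rw [h2]
  nlinarith [chU_lo_8]
lemma chU_hi_7 : Real.cos ((0.100165498485962573795 : ℝ) / 2 ^ 7) ≤ (0.999999693813275911280898798954 : ℝ) := by
  have h2 := Real.cos_two_mul ((0.100165498485962573795 : ℝ) / 2 ^ 8)
  rw [show (2:ℝ) * ((0.100165498485962573795 : ℝ) / 2 ^ 8) = (0.100165498485962573795 : ℝ) / 2 ^ 7 by ring] at h2
  rw [h2]
  nlinarith [chU_lo_8, chU_hi_8]
lemma chU_lo_6 : (0.999998775253291145147561007918 : ℝ) ≤ Real.cos ((0.100165498485962573795 : ℝ) / 2 ^ 6) := by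
  have h2 := Real.cos_two_mul ((0.100165498485962573795 : ℝ) / 2 ^ 7)
  rw [show (2:ℝ) * ((0.100165498485962573795 : ℝ) / 2 ^ 7) = (0.100165498485962573795 : ℝ) / 2 ^ 6 by ring] at h2
  rw [h2]
  nlinarith [chU_lo_7]
lemma chU_hi_6 : Real.cos ((0.100165498485962573795 : ℝ) / 2 ^ 6) ≤ (0.999998775253291145743611558612 : ℝ) := by
  have h2 := Real.cos_two_mul ((0.100165498485962573795 : ℝ) / 2 ^ 7)
  rw [show (2:ℝ) * ((0.100165498485962573795 : ℝ) / 2 ^ 7) = (0.100165498485962573795 : ℝ) / 2 ^ 6 by ring] at h2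
  rw [h2]
  nlinarith [chU_lo_7, chU_hi_7]
lemma chU_lo_5 : (0.999995101016164589591945617043 : ℝ) ≤ Real.cos ((0.100165498485962573795 : ℝ) / 2 ^ 5) := by
  have h2 := Real.cos_two_mul ((0.100165498485962573795 : ℝ) / 2 ^ 6)
  rw [show (2:ℝ) * ((0.100165498485962573795 : ℝ) / 2 ^ 6) = (0.100165498485962573795 : ℝ) / 2 ^ 5 by ring] at h2
  rw [h2]
  nlinarith [chU_lo_6]
lemma chU_hi_5 : Real.cos ((0.100165498485962573795 : ℝ) / 2 ^ 5) ≤ (0.999995101016164591976144899776 : ℝ) := by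
  have h2 := Real.cos_two_mul ((0.100165498485962573795 : ℝ) / 2 ^ 6)
  rw [show (2:ℝ) * ((0.100165498485962573795 : ℝ) / 2 ^ 6) = (0.100165498485962573795 : ℝ) / 2 ^ 5 by ring] at h2
  rw [h2]
  nlinarith [chU_lo_6, chU_hi_6]
lemma chU_lo_4 : (0.999980404112658443607007412319 : ℝ) ≤ Real.cos ((0.100165498485962573795 : ℝ) / 2 ^ 4) := by
  have h2 := Real.cos_two_mul ((0.100165498485962573795 : ℝ) / 2 ^ 5)
  rw [show (2:ℝ) * ((0.100165498485962573795 : ℝ) / 2 ^ 5) = (0.100165498485962573795 : ℝ) / 2 ^ 4 by ring] at h2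
  rw [h2]
  nlinarith [chU_lo_5]
lemma chU_hi_4 : Real.cos ((0.100165498485962573795 : ℝ) / 2 ^ 4) ≤ (0.999980404112658453143757822637 : ℝ) := by
  have h2 := Real.cos_two_mul ((0.100165498485962573795 : ℝ) / 2 ^ 5)
  rw [show (2:ℝ) * ((0.100165498485962573795 : ℝ) / 2 ^ 5) = (0.100165498485962573795 : ℝ) / 2 ^ 4 by ring] at h2
  rw [h2]
  nlinarith [chU_lo_5, chU_hi_5]
lemma chU_lo_3 : (0.999921617218631375833969807438 : ℝ) ≤ Real.cos ((0.100165498485962573795 : ℝ) / 2 ^ 3) := by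
  have h2 := Real.cos_two_mul ((0.100165498485962573795 : ℝ) / 2 ^ 4)
  rw [show (2:ℝ) * ((0.100165498485962573795 : ℝ) / 2 ^ 4) = (0.100165498485962573795 : ℝ) / 2 ^ 3 by ring] at h2
  rw [h2]
  nlinarith [chU_lo_4]
lemma chU_hi_3 : Real.cos ((0.100165498485962573795 : ℝ) / 2 ^ 3) ≤ (0.999921617218631413980223924365 : ℝ) := by
  have h2 := Real.cos_two_mul ((0.100165498485962573795 : ℝ) / 2 ^ 4)
  rw [show (2:ℝ) * ((0.100165498485962573795 : ℝ) / 2 ^ 4) = (0.100165498485962573795 : ℝ) / 2 ^ 3 by ring] at h2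
  rw [h2]
  nlinarith [chU_lo_4, chU_hi_4]
lemma chU_lo_2 : (0.999686481162246333498950610528 : ℝ) ≤ Real.cos ((0.100165498485962573795 : ℝ) / 2 ^ 2) := by
  have h2 := Real.cos_two_mul ((0.100165498485962573795 : ℝ) / 2 ^ 3)
  rw [show (2:ℝ) * ((0.100165498485962573795 : ℝ) / 2 ^ 3) = (0.100165498485962573795 : ℝ) / 2 ^ 2 by ring] at h2
  rw [h2]
  nlinarith [chU_lo_3]
lemma chU_hi_2 : Real.cos ((0.100165498485962573795 : ℝ) / 2 ^ 2) ≤ (0.999686481162246486072007040251 : ℝ) := by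
  have h2 := Real.cos_two_mul ((0.100165498485962573795 : ℝ) / 2 ^ 3)
  rw [show (2:ℝ) * ((0.100165498485962573795 : ℝ) / 2 ^ 3) = (0.100165498485962573795 : ℝ) / 2 ^ 2 by ring] at h2
  rw [h2]
  nlinarith [chU_lo_3, chU_hi_3]
lemma chU_lo_1 : (0.998746121237108586815521157593 : ℝ) ≤ Real.cos ((0.100165498485962573795 : ℝ) / 2 ^ 1) := by
  have h2 := Real.cos_two_mul ((0.100165498485962573795 : ℝ) / 2 ^ 2)
  rw [show (2:ℝ) * ((0.100165498485962573795 : ℝ) / 2 ^ 2) = (0.100165498485962573795 : ℝ) / 2 ^ 1 by ring] at h2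
  rw [h2]
  nlinarith [chU_lo_2]
lemma chU_hi_1 : Real.cos ((0.100165498485962573795 : ℝ) / 2 ^ 1) ≤ (0.998746121237109196916408767189 : ℝ) := by
  have h2 := Real.cos_two_mul ((0.100165498485962573795 : ℝ) / 2 ^ 2)
  rw [show (2:ℝ) * ((0.100165498485962573795 : ℝ) / 2 ^ 2) = (0.100165498485962573795 : ℝ) / 2 ^ 1 by ring] at h2
  rw [h2]
  nlinarith [chU_lo_2, chU_hi_2]
lemma chU_lo_0 : (0.994987629372338407463614958841 : ℝ) ≤ Real.cos ((0.100165498485962573795 : ℝ)) := by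
  have h2 := Real.cos_two_mul ((0.100165498485962573795 : ℝ) / 2 ^ 1)
  rw [show (2:ℝ) * ((0.100165498485962573795 : ℝ) / 2 ^ 1) = (0.100165498485962573795 : ℝ) by ring] at h2
  rw [h2]
  nlinarith [chU_lo_1]
lemma chU_hi_0 : Real.cos ((0.100165498485962573795 : ℝ)) ≤ (0.994987629372340844807195212447 : ℝ) := by
  have h2 := Real.cos_two_mul ((0.100165498485962573795 : ℝ) / 2 ^ 1)
  rw [show (2:ℝ) * ((0.100165498485962573795 : ℝ) / 2 ^ 1) = (0.100165498485962573795 : ℝ) by ring] at h2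
  rw [h2]
  nlinarith [chU_lo_1, chU_hi_1]


lemma fB_L_neg : fB (0.3566668367128 : ℝ) < 0 := by
  have hpl := Real.pi_gt_d20
  have hph := Real.pi_lt_d20
  have hpi := Real.pi_pos
  unfold fB
  have hs3 := sqrt_bounds_of 3 1.732050807568877293527 1.732050807568877293528
    (by norm_num) (by norm_num) (by norm_num) (by norm_num)
  have hu := sqrt_bounds_of (12 * (0.3566668367128:ℝ) + 1)
    2.297825502633652989111 2.297825502633652989112 (by norm_num) (by norm_num) (by norm_num) (by norm_num)
  set u := Real.sqrt (12 * (0.3566668367128:ℝ) + 1) with hu_def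
  rw [show (36 * (0.3566668367128:ℝ) + 3) = 3 * (12 * (0.3566668367128:ℝ) + 1) by norm_num,
    Real.sqrt_mul (by norm_num : (0:ℝ) ≤ 3), ← hu_def]
  rw [sin_as_cos]
  set x := 2 * π * u / 3 - 3 * π / 2 with hx_def
  have hx0 : 0 < x := by rw [hx_def]; nlinarith [hu.1, hu.2]
  have hxh : x ≤ (0.100165498485415692818 : ℝ) := by rw [hx_def]; nlinarith [hu.1, hu.2]
  have hcos : Real.cos (0.100165498485415692818 : ℝ) ≤ Real.cos x :=
    Real.cos_le_cos_of_nonneg_of_le_pi (le_of_lt hx0) (by nlinarith) hxh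
  have hchain := chL_lo_0
  have hfinal : Real.sqrt 3 * u / 4 < (0.994987629372393094515040298173 : ℝ) := by
    nlinarith [hs3.1, hs3.2, hu.1, hu.2, Real.sqrt_nonneg 3]
  linarith

lemma fB_U_pos : 0 < fB (0.3566668367129 : ℝ) := by
  have hpl := Real.pi_gt_d20
  have hph := Real.pi_lt_d20
  have hpi := Real.pi_pos
  unfold fB
  have hs3 := sqrt_bounds_of 3 1.732050807568877293527 1.732050807568877293528
    (by norm_num) (by norm_num) (by norm_num) (by norm_num)
  have hu := sqrt_bounds_of (12 * (0.3566668367129:ℝ) + 1)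
    2.297825502633914105545 2.297825502633914105546 (by norm_num) (by norm_num) (by norm_num) (by norm_num)
  set u := Real.sqrt (12 * (0.3566668367129:ℝ) + 1) with hu_def
  rw [show (36 * (0.3566668367129:ℝ) + 3) = 3 * (12 * (0.3566668367129:ℝ) + 1) by norm_num,
    Real.sqrt_mul (by norm_num : (0:ℝ) ≤ 3), ← hu_def]
  rw [sin_as_cos]
  set x := 2 * π * u / 3 - 3 * π / 2 with hx_def
  have hxl : (0.100165498485962573795 : ℝ) ≤ x := by rw [hx_def]; nlinarith [hu.1, hu.2]
  have hxpi : x ≤ π := by rw [hx_def]; nlinarith [hu.1, hu.2]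
  have hcos : Real.cos x ≤ Real.cos (0.100165498485962573795 : ℝ) :=
    Real.cos_le_cos_of_nonneg_of_le_pi (by norm_num) hxpi hxl
  have hchain := chU_hi_0
  have hfinal : (0.994987629372340844807195212447 : ℝ) < Real.sqrt 3 * u / 4 := by
    nlinarith [hs3.1, hs3.2, hu.1, hu.2, Real.sqrt_nonneg 3]
  linarith

lemma fB_cont : Continuous fB := by
  unfold fB
  have h1 : Continuous fun ξ : ℝ => Real.sqrt (36 * ξ + 3) / 4 :=
    (Real.continuous_sqrt.comp (by continuity)).div_const 4
  have h2 : Continuous fun ξ : ℝ => Real.sin (2 * π * Real.sqrt (12 * ξ + 1) / 3) :=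
    Real.continuous_sin.comp
      ((continuous_const.mul (Real.continuous_sqrt.comp (by continuity))).div_const 3)
  exact h1.add h2

lemma root_gt (ξ : ℝ) (hmem : ξ ∈ Set.Ioo (1/4 : ℝ) (2/3 : ℝ)) (hroot : fB ξ = 0) :
    (0.32 : ℝ) < ξ := by
  by_contra h
  push_neg at h
  have := fB_neg_left ξ hmem.1 h
  linarith

lemma roots_eq (a b : ℝ) (ha : a ∈ Set.Ioo (1/4 : ℝ) (2/3 : ℝ)) (hra : fB a = 0)
    (hb : b ∈ Set.Ioo (1/4 : ℝ) (2/3 : ℝ)) (hrb : fB b = 0) : a = b := by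
  have ha32 := root_gt a ha hra
  have hb32 := root_gt b hb hrb
  rcases lt_trichotomy a b with h | h | h
  · exfalso; have := fB_mono a b (le_of_lt ha32) h (le_of_lt hb.2); linarith
  · exact h
  · exfalso; have := fB_mono b a (le_of_lt hb32) h (le_of_lt ha.2); linarith

/-- The unique solution `ξ ∈ (1/4, 2/3)` of `√(36ξ+3)/4 + sin(2π√(12ξ+1)/3) = 0`
satisfies `0.3566668367128 < ξ < 0.3566668367129`. -/
theorem backbone_exponent_numerics :
    (∃! ξ : ℝ, ξ ∈ Set.Ioo (1/4 : ℝ) (2/3 : ℝ) ∧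
      Real.sqrt (36 * ξ + 3) / 4 + Real.sin (2 * π * Real.sqrt (12 * ξ + 1) / 3) = 0) ∧
    ∀ ξ : ℝ, ξ ∈ Set.Ioo (1/4 : ℝ) (2/3 : ℝ) →
      Real.sqrt (36 * ξ + 3) / 4 + Real.sin (2 * π * Real.sqrt (12 * ξ + 1) / 3) = 0 →
      0.3566668367128 < ξ ∧ ξ < 0.3566668367129 := by
  have hLU : (0.3566668367128 : ℝ) ≤ 0.3566668367129 := by norm_num
  have hivt := intermediate_value_Ioo hLU fB_cont.continuousOn
  have h0mem : (0:ℝ) ∈ Set.Ioo (fB 0.3566668367128) (fB 0.3566668367129) :=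
    ⟨fB_L_neg, fB_U_pos⟩
  obtain ⟨ξ₀, hξ₀mem, hξ₀⟩ := hivt h0mem
  have hξ₀Ioo : ξ₀ ∈ Set.Ioo (1/4 : ℝ) (2/3 : ℝ) := by
    constructor
    · have := hξ₀mem.1; norm_num at this ⊢; linarith
    · have := hξ₀mem.2; norm_num at this ⊢; linarith
  constructor
  · exact ⟨ξ₀, ⟨hξ₀Ioo, hξ₀⟩, fun y hy => roots_eq y ξ₀ hy.1 hy.2 hξ₀Ioo hξ₀⟩
  · intro ξ hmem hroot
    have hroot' : fB ξ = 0 := hroot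
    have h32 := root_gt ξ hmem hroot'
    constructor
    · by_contra h
      push_neg at h
      rcases eq_or_lt_of_le h with heq | hlt
      · rw [heq] at hroot'; linarith [fB_L_neg]
      · have := fB_mono ξ 0.3566668367128 (le_of_lt h32) hlt (by norm_num)
        linarith [fB_L_neg]
    · by_contra h
      push_neg at h
      rcases eq_or_lt_of_le h with heq | hlt
      · rw [← heq] at hroot'; linarith [fB_U_pos]
      · have := fB_mono 0.3566668367129 ξ (by norm_num) hlt (le_of_lt hmem.2)
        linarith [fB_U_pos]
end
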